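/- arXiv:0903.5167 — 4 statements merged into one kernel-verified Lean document; each statement's English description precedes it below -/
import Mathlib

section
/- Let O ⊆ ℝ^{n+1} be a nonempty open convex cone contained in the nonnegative orthant [0,∞)^{n+1}, let M > 0, and let F be a subadditive real-valued function on S := (O \ B(0,M)) ∩ ℕ^{n+1} satisfying F(β) ≥ C·|β| on S for some constant C. Define c[F] on O ∩ Σ^0 by c[F](p) := lim_{k→∞} F(α(k))/|α(k)| for any sequence α(k) ∈ S with |α(k)| → ∞ and α(k)/|α(k)| → p (this limit exists and is independent of the sequence). Then c[F] is a convex function on O ∩ Σ^0. -/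
open Set Metric Filter

/-- The image of a vector of natural numbers in Euclidean space. -/
noncomputable def toR (n : ℕ) (α : Fin (n + 1) → ℕ) : EuclideanSpace ℝ (Fin (n + 1)) :=
  WithLp.toLp 2 (fun i => (α i : ℝ))

/-- The sum of the coordinates of a vector, denoted `|·|` in the paper. -/
noncomputable def coordSum (n : ℕ) (x : EuclideanSpace ℝ (Fin (n + 1))) : ℝ :=
  ∑ i, x i

/-- `Σ^0 := {x ∈ ℝ^{n+1} : |x| = 1, all coordinates strictly positive}`. -/
def Sigma0 (n : ℕ) : Set (EuclideanSpace ℝ (Fin (n + 1))) :=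
  {x | (∑ i, x i) = 1 ∧ ∀ i, 0 < x i}

lemma toR_apply (n : ℕ) (α : Fin (n+1) → ℕ) (i : Fin (n+1)) : toR n α i = (α i : ℝ) := rfl

lemma toR_comb (n : ℕ) (m l : ℕ) (α β : Fin (n+1) → ℕ) :
    toR n (m • α + l • β) = (m:ℝ) • toR n α + (l:ℝ) • toR n β := by
  ext i
  simp only [toR, PiLp.toLp_apply, Pi.add_apply, Pi.smul_apply, smul_eq_mul, PiLp.add_apply, PiLp.smul_apply]
  push_cast
  ring

lemma coordSum_comb (n : ℕ) (m l : ℝ) (x y : EuclideanSpace ℝ (Fin (n+1))) :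
    coordSum n (m • x + l • y) = m * coordSum n x + l * coordSum n y := by
  simp only [coordSum, PiLp.add_apply, PiLp.smul_apply, smul_eq_mul,
    Finset.sum_add_distrib, Finset.mul_sum]

lemma coordSum_le_norm (n : ℕ) (x : EuclideanSpace ℝ (Fin (n+1))) :
    coordSum n x ≤ (n+1) * ‖x‖ := by
  have hn : ‖x‖ = Real.sqrt (∑ j, (x j)^2) := by
    rw [EuclideanSpace.norm_eq]
    congr 1
    exact Finset.sum_congr rfl fun j _ => by rw [Real.norm_eq_abs, sq_abs]
  have h : ∀ i, x i ≤ ‖x‖ := by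
    intro i
    rw [hn]
    calc x i ≤ |x i| := le_abs_self _
    _ = Real.sqrt ((x i)^2) := (Real.sqrt_sq_eq_abs _).symm
    _ ≤ Real.sqrt (∑ j, (x j)^2) := Real.sqrt_le_sqrt
        (Finset.single_le_sum (fun j _ => sq_nonneg (x j)) (Finset.mem_univ i))
  calc coordSum n x ≤ ∑ _i : Fin (n+1), ‖x‖ := Finset.sum_le_sum (fun i _ => h i)
  _ = (n+1) * ‖x‖ := by
      rw [Finset.sum_const, Finset.card_univ, Fintype.card_fin, nsmul_eq_mul]
      push_cast; ring

lemma tendsto_euclid {n : ℕ} {f : ℕ → EuclideanSpace ℝ (Fin (n+1))}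
    {L : EuclideanSpace ℝ (Fin (n+1))}
    (h : ∀ i, Tendsto (fun k => f k i) atTop (nhds (L i))) :
    Tendsto f atTop (nhds L) := by
  let e : EuclideanSpace ℝ (Fin (n+1)) ≃L[ℝ] (Fin (n+1) → ℝ) := EuclideanSpace.equiv _ ℝ
  have h2 : Tendsto (fun k => e (f k)) atTop (nhds (e L)) := tendsto_pi_nhds.2 h
  have h3 := (e.symm.continuous.tendsto (e L)).comp h2
  simpa [Function.comp_def, e] using h3

lemma ceil_div_tendsto (t : ℝ) (ht : 0 ≤ t) :
    Tendsto (fun k : ℕ => (⌈(k:ℝ) * t⌉₊ : ℝ) / k) atTop (nhds t) := by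
  have h1 : Tendsto (fun k : ℕ => t + 1 / (k:ℝ)) atTop (nhds (t + 0)) :=
    tendsto_const_nhds.add tendsto_one_div_atTop_nhds_zero_nat
  rw [add_zero] at h1
  apply tendsto_of_tendsto_of_tendsto_of_le_of_le' (tendsto_const_nhds (x := t)) h1
  · filter_upwards [eventually_ge_atTop 1] with k hk
    have hk' : (0:ℝ) < k := by exact_mod_cast Nat.pos_of_ne_zero (by omega)
    rw [le_div_iff₀ hk']
    calc t * k = (k:ℝ) * t := by ring
    _ ≤ _ := Nat.le_ceil _
  · filter_upwards [eventually_ge_atTop 1] with k hk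
    have hk' : (0:ℝ) < k := by exact_mod_cast Nat.pos_of_ne_zero (by omega)
    rw [div_le_iff₀ hk']
    have h2 := (Nat.ceil_lt_add_one (by positivity : (0:ℝ) ≤ (k:ℝ) * t)).le
    have h3 : (t + 1/k) * k = (k:ℝ) * t + 1 := by field_simp
    linarith [h2, h3.ge]

noncomputable def seqA (n : ℕ) (p : EuclideanSpace ℝ (Fin (n+1))) (k : ℕ) : Fin (n+1) → ℕ :=
  fun i => ⌈(k:ℝ) * p i⌉₊

lemma coordSum_seqA_ge (n : ℕ) (p : EuclideanSpace ℝ (Fin (n+1))) (hp1 : ∑ i, p i = 1) (k : ℕ) :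
    (k:ℝ) ≤ coordSum n (toR n (seqA n p k)) := by
  have h : (k:ℝ) = ∑ i, (k:ℝ) * p i := by rw [← Finset.mul_sum, hp1, mul_one]
  rw [h]
  exact Finset.sum_le_sum fun i _ => (Nat.le_ceil _).trans_eq (toR_apply n (seqA n p k) i).symm

lemma coordSum_seqA_atTop (n : ℕ) (p : EuclideanSpace ℝ (Fin (n+1))) (hp1 : ∑ i, p i = 1) :
    Tendsto (fun k => coordSum n (toR n (seqA n p k))) atTop atTop :=
  tendsto_atTop_mono (coordSum_seqA_ge n p hp1) tendsto_natCast_atTop_atTop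

lemma seqA_coord_div (n : ℕ) (p : EuclideanSpace ℝ (Fin (n+1))) (i : Fin (n+1)) (hpi : 0 ≤ p i) :
    Tendsto (fun k : ℕ => (toR n (seqA n p k) i) / k) atTop (nhds (p i)) := by
  simpa [seqA, toR] using ceil_div_tendsto (p i) hpi

lemma coordSum_seqA_div (n : ℕ) (p : EuclideanSpace ℝ (Fin (n+1))) (hp1 : ∑ i, p i = 1)
    (hpos : ∀ i, 0 ≤ p i) :
    Tendsto (fun k : ℕ => coordSum n (toR n (seqA n p k)) / k) atTop (nhds 1) := by
  have h := tendsto_finset_sum Finset.univ (fun i (_ : i ∈ Finset.univ) => seqA_coord_div n p i (hpos i))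
  rw [hp1] at h
  apply h.congr
  intro k
  rw [coordSum, Finset.sum_div]

lemma seqA_dir (n : ℕ) (p : EuclideanSpace ℝ (Fin (n+1))) (hp1 : ∑ i, p i = 1)
    (hpos : ∀ i, 0 ≤ p i) :
    Tendsto (fun k : ℕ => (coordSum n (toR n (seqA n p k)))⁻¹ • toR n (seqA n p k))
      atTop (nhds p) := by
  apply tendsto_euclid
  intro i
  have h1 := (seqA_coord_div n p i (hpos i)).div (coordSum_seqA_div n p hp1 hpos) one_ne_zero
  rw [div_one] at h1
  apply h1.congr'
  filter_upwards [eventually_ge_atTop 1] with k hk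
  have hk0 : (k:ℝ) ≠ 0 := by
    have : (0:ℕ) < k := by omega
    exact_mod_cast this.ne'
  have hu : (0:ℝ) < coordSum n (toR n (seqA n p k)) := by
    have := coordSum_seqA_ge n p hp1 k
    have hk1 : (1:ℝ) ≤ (k:ℝ) := by exact_mod_cast hk
    linarith
  simp only [Pi.div_apply, PiLp.smul_apply, smul_eq_mul]
  rw [div_div_div_cancel_right₀]
  · rw [div_eq_inv_mul]
  · exact hk0

lemma combo_div (a u FA b v FB w : ℝ) (hu : u ≠ 0) (hv : v ≠ 0) (hw : w ≠ 0) :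
    (a * FA + b * FB) / w = a * u / w * (FA / u) + b * v / w * (FB / v) := by
  field_simp

lemma sigma0_convex (n : ℕ) : Convex ℝ (Sigma0 n) := by
  intro x hx y hy a b ha hb hab
  obtain ⟨hx1, hxp⟩ := hx
  obtain ⟨hy1, hyp⟩ := hy
  constructor
  · simp only [PiLp.add_apply, PiLp.smul_apply, smul_eq_mul]
    rw [Finset.sum_add_distrib, ← Finset.mul_sum, ← Finset.mul_sum, hx1, hy1]
    linarith
  · intro i
    simp only [PiLp.add_apply, PiLp.smul_apply, smul_eq_mul]
    rcases ha.lt_or_eq with ha' | ha'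
    · have h1 : 0 < a * x i := mul_pos ha' (hxp i)
      have h2 : 0 ≤ b * y i := mul_nonneg hb (hyp i).le
      linarith
    · have ha0 : a = 0 := ha'.symm
      have hb1 : b = 1 := by linarith
      rw [ha0, hb1]
      simpa using hyp i


set_option maxHeartbeats 2000000 in
/-- The function `c[F]` defined by the limits `F(α(k))/|α(k)|` is convex on `O ∩ Σ^0`. -/
theorem chebyshev_transform_convexOn (n : ℕ) (O : Set (EuclideanSpace ℝ (Fin (n + 1))))
    (hO_open : IsOpen O) (hO_conv : Convex ℝ O) (hO_ne : O.Nonempty)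
    (hO_orth : O ⊆ {x | ∀ i, 0 ≤ x i})
    (hO_cone : ∀ c : ℝ, 0 < c → ∀ x ∈ O, c • x ∈ O)
    (M : ℝ) (hM : 0 < M)
    (F : (Fin (n + 1) → ℕ) → ℝ)
    (hsub : ∀ α β : Fin (n + 1) → ℕ, toR n α ∈ O \ ball 0 M → toR n β ∈ O \ ball 0 M →
      F (α + β) ≤ F α + F β)
    (C : ℝ)
    (hlow : ∀ β : Fin (n + 1) → ℕ, toR n β ∈ O \ ball 0 M →
      C * coordSum n (toR n β) ≤ F β)
    (c : EuclideanSpace ℝ (Fin (n + 1)) → ℝ)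
    (hc : ∀ p ∈ O ∩ Sigma0 n, ∀ α : ℕ → (Fin (n + 1) → ℕ),
      (∀ k, toR n (α k) ∈ O \ ball 0 M) →
      Tendsto (fun k => coordSum n (toR n (α k))) atTop atTop →
      Tendsto (fun k => (coordSum n (toR n (α k)))⁻¹ • toR n (α k)) atTop (nhds p) →
      Tendsto (fun k => F (α k) / coordSum n (toR n (α k))) atTop (nhds (c p))) :
    ConvexOn ℝ (O ∩ Sigma0 n) c := by
  -- membership criterion for `O \ ball 0 M`
  have memS : ∀ x : EuclideanSpace ℝ (Fin (n+1)), ((n:ℝ)+1) * M ≤ coordSum n x →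
      (coordSum n x)⁻¹ • x ∈ O → x ∈ O \ ball 0 M := by
    intro x hcs hdir
    have hs0 : (0:ℝ) < coordSum n x := lt_of_lt_of_le (by positivity) hcs
    refine ⟨?_, ?_⟩
    · have h := hO_cone (coordSum n x) hs0 _ hdir
      rwa [smul_inv_smul₀ hs0.ne'] at h
    · intro hball
      rw [mem_ball, dist_zero_right] at hball
      have h2 := coordSum_le_norm n x
      nlinarith
  -- nonnegative integer combinations stay in `O \ ball 0 M`
  have dirmem : ∀ (x y : EuclideanSpace ℝ (Fin (n+1))) (m l : ℕ), 1 ≤ m + l →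
      (coordSum n x)⁻¹ • x ∈ O → (coordSum n y)⁻¹ • y ∈ O →
      ((n:ℝ)+1)*M ≤ coordSum n x → ((n:ℝ)+1)*M ≤ coordSum n y →
      (m:ℝ) • x + (l:ℝ) • y ∈ O \ ball 0 M := by
    intro x y m l hml hx hy hux hvy
    have hM1 : (0:ℝ) < ((n:ℝ)+1)*M := by positivity
    have hu0 : 0 < coordSum n x := lt_of_lt_of_le hM1 hux
    have hv0 : 0 < coordSum n y := lt_of_lt_of_le hM1 hvy
    have hT : coordSum n ((m:ℝ) • x + (l:ℝ) • y)
        = m * coordSum n x + l * coordSum n y := coordSum_comb n _ _ x y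
    have hml' : 1 ≤ (m:ℝ) ∨ 1 ≤ (l:ℝ) := by
      rcases Nat.lt_or_ge m 1 with h | h
      · right
        have h2 : 1 ≤ l := by omega
        exact_mod_cast h2
      · left
        exact_mod_cast h
    have hm0 : (0:ℝ) ≤ (m:ℝ) := Nat.cast_nonneg m
    have hl0 : (0:ℝ) ≤ (l:ℝ) := Nat.cast_nonneg l
    have hTge : ((n:ℝ)+1)*M ≤ (m:ℝ) * coordSum n x + l * coordSum n y := by
      rcases hml' with h | h
      · nlinarith [mul_nonneg hl0 hv0.le]
      · nlinarith [mul_nonneg hm0 hu0.le]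
    apply memS
    · rw [hT]; exact hTge
    · rw [hT]
      have hT0 : (0:ℝ) < (m:ℝ) * coordSum n x + l * coordSum n y :=
        lt_of_lt_of_le hM1 hTge
      have hcomb : ((m:ℝ) * coordSum n x + l * coordSum n y)⁻¹ • ((m:ℝ) • x + (l:ℝ) • y)
          = (((m:ℝ) * coordSum n x)/((m:ℝ) * coordSum n x + l * coordSum n y)) • ((coordSum n x)⁻¹ • x)
          + (((l:ℝ) * coordSum n y)/((m:ℝ) * coordSum n x + l * coordSum n y)) • ((coordSum n y)⁻¹ • y) := by
        rw [smul_add, smul_smul, smul_smul, smul_smul, smul_smul]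
        congr 1
        · congr 1
          field_simp
        · congr 1
          field_simp
      rw [hcomb]
      exact hO_conv hx hy (by positivity) (by positivity)
        (by field_simp)
  -- iterated subadditivity
  have iter : ∀ (α β : Fin (n+1) → ℕ),
      (∀ m l : ℕ, 1 ≤ m + l → toR n (m • α + l • β) ∈ O \ ball 0 M) →
      ∀ a b : ℕ, 1 ≤ a + b → F (a • α + b • β) ≤ a * F α + b * F β := by
    intro α β H a
    induction a with
    | zero =>
      intro b hb
      induction b with
      | zero => omega
      | succ b ihb =>
        rcases Nat.eq_zero_or_pos b with hb0 | hb1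
        · subst hb0
          have h1 : (0:ℕ) • α + (0+1) • β = β := by funext i; simp
          rw [h1]; push_cast; simp
        · have heq : (0:ℕ) • α + (b+1) • β = β + ((0:ℕ) • α + b • β) := by
            funext i
            simp only [Pi.add_apply, Pi.smul_apply, smul_eq_mul]
            ring
          have hmem1 : toR n β ∈ O \ ball 0 M := by
            have := H 0 1 (by omega); simpa using this
          have hstep := hsub β ((0:ℕ) • α + b • β) hmem1 (H 0 b (by omega))
          rw [← heq] at hstep
          have hrec := ihb (by omega)
          push_cast at hrec ⊢
          linarith
    | succ a iha =>
      intro b hb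
      rcases Nat.eq_zero_or_pos (a + b) with h0 | h1
      · have ha0 : a = 0 := by omega
        have hb0 : b = 0 := by omega
        subst ha0; subst hb0
        have h1 : (0+1:ℕ) • α + 0 • β = α := by funext i; simp
        rw [h1]; push_cast; simp
      · have heq : (a+1) • α + b • β = α + (a • α + b • β) := by
          funext i
          simp only [Pi.add_apply, Pi.smul_apply, smul_eq_mul]
          ring
        have hmem1 : toR n α ∈ O \ ball 0 M := by
          have := H 1 0 (by omega); simpa using this
        have hstep := hsub α (a • α + b • β) hmem1 (H a b h1)
        rw [← heq] at hstep
        have hrec := iha b h1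
        push_cast at hrec ⊢
        linarith
  constructor
  · exact hO_conv.inter (sigma0_convex n)
  rintro p ⟨hpO, hp1, hppos⟩ q ⟨hqO, hq1, hqpos⟩ t s ht hs hts
  rcases eq_or_lt_of_le ht with h0 | ht'
  · have hs1 : s = 1 := by linarith
    rw [← h0, hs1]
    simp
  rcases eq_or_lt_of_le hs with h0 | hs'
  · have ht1 : t = 1 := by linarith
    rw [← h0, ht1]
    simp
  -- main case: 0 < t, 0 < s
  have hppos' : ∀ i, 0 ≤ p i := fun i => (hppos i).le
  have hqpos' : ∀ i, 0 ≤ q i := fun i => (hqpos i).le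
  have huT := coordSum_seqA_atTop n p hp1
  have hvT := coordSum_seqA_atTop n q hq1
  have hud := coordSum_seqA_div n p hp1 hppos'
  have hvd := coordSum_seqA_div n q hq1 hqpos'
  have hudir := seqA_dir n p hp1 hppos'
  have hvdir := seqA_dir n q hq1 hqpos'
  have hat := ceil_div_tendsto t ht
  have hbs := ceil_div_tendsto s hs
  have hEv : ∀ᶠ k : ℕ in atTop,
      ((coordSum n (toR n (seqA n p k)))⁻¹ • toR n (seqA n p k) ∈ O ∧
       (coordSum n (toR n (seqA n q k)))⁻¹ • toR n (seqA n q k) ∈ O ∧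
       ((n:ℝ)+1)*M ≤ coordSum n (toR n (seqA n p k)) ∧
       ((n:ℝ)+1)*M ≤ coordSum n (toR n (seqA n q k)) ∧ 1 ≤ k) := by
    filter_upwards [hudir.eventually (hO_open.eventually_mem hpO),
      hvdir.eventually (hO_open.eventually_mem hqO),
      huT.eventually_ge_atTop (((n:ℝ)+1)*M),
      hvT.eventually_ge_atTop (((n:ℝ)+1)*M),
      eventually_ge_atTop 1] with k h1 h2 h3 h4 h5
    exact ⟨h1, h2, h3, h4, h5⟩
  obtain ⟨K, hK⟩ := eventually_atTop.1 hEv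
  have hkK1 : ∀ k : ℕ, 1 ≤ k + K := fun k => (hK (k+K) (Nat.le_add_left K k)).2.2.2.2
  have key : ∀ k m l : ℕ, 1 ≤ m + l →
      toR n (m • seqA n p (k+K) + l • seqA n q (k+K)) ∈ O \ ball 0 M := by
    intro k m l hml
    obtain ⟨h1, h2, h3, h4, _⟩ := hK (k+K) (Nat.le_add_left K k)
    rw [toR_comb]
    exact dirmem _ _ m l hml h1 h2 h3 h4
  have hak1 : ∀ k : ℕ, 1 ≤ ⌈((k+K:ℕ):ℝ)*t⌉₊ := by
    intro k
    apply Nat.ceil_pos.2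
    have h1 : (1:ℝ) ≤ ((k+K:ℕ):ℝ) := by exact_mod_cast hkK1 k
    nlinarith
  -- positivity facts
  have hu_pos : ∀ k : ℕ, (0:ℝ) < coordSum n (toR n (seqA n p (k+K))) := by
    intro k
    have h1 := coordSum_seqA_ge n p hp1 (k+K)
    have h2 : (1:ℝ) ≤ ((k+K:ℕ):ℝ) := by exact_mod_cast hkK1 k
    linarith
  have hv_pos : ∀ k : ℕ, (0:ℝ) < coordSum n (toR n (seqA n q (k+K))) := by
    intro k
    have h1 := coordSum_seqA_ge n q hq1 (k+K)
    have h2 : (1:ℝ) ≤ ((k+K:ℕ):ℝ) := by exact_mod_cast hkK1 k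
    linarith
  have hwEq : ∀ k : ℕ,
      coordSum n (toR n (⌈((k+K:ℕ):ℝ)*t⌉₊ • seqA n p (k+K) + ⌈((k+K:ℕ):ℝ)*s⌉₊ • seqA n q (k+K)))
      = (⌈((k+K:ℕ):ℝ)*t⌉₊:ℝ) * coordSum n (toR n (seqA n p (k+K)))
        + (⌈((k+K:ℕ):ℝ)*s⌉₊:ℝ) * coordSum n (toR n (seqA n q (k+K))) := by
    intro k
    rw [toR_comb, coordSum_comb]
  have hw_ge : ∀ k : ℕ, ((k+K:ℕ):ℝ) ≤
      coordSum n (toR n (⌈((k+K:ℕ):ℝ)*t⌉₊ • seqA n p (k+K) + ⌈((k+K:ℕ):ℝ)*s⌉₊ • seqA n q (k+K))) := by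
    intro k
    rw [hwEq k]
    have h1 : (1:ℝ) ≤ (⌈((k+K:ℕ):ℝ)*t⌉₊:ℝ) := by exact_mod_cast hak1 k
    have h2 := coordSum_seqA_ge n p hp1 (k+K)
    have h3 : (0:ℝ) ≤ (⌈((k+K:ℕ):ℝ)*s⌉₊:ℝ) := Nat.cast_nonneg _
    nlinarith [hu_pos k, hv_pos k]
  have hw_pos : ∀ k : ℕ,
      (0:ℝ) < coordSum n (toR n (⌈((k+K:ℕ):ℝ)*t⌉₊ • seqA n p (k+K) + ⌈((k+K:ℕ):ℝ)*s⌉₊ • seqA n q (k+K))) := by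
    intro k
    have h1 := hw_ge k
    have h2 : (1:ℝ) ≤ ((k+K:ℕ):ℝ) := by exact_mod_cast hkK1 k
    linarith
  -- shifted limits
  have hshift := tendsto_add_atTop_nat K
  have hat' : Tendsto (fun k : ℕ => (⌈((k+K:ℕ):ℝ)*t⌉₊:ℝ)/((k+K:ℕ):ℝ)) atTop (nhds t) :=
    hat.comp hshift
  have hbs' : Tendsto (fun k : ℕ => (⌈((k+K:ℕ):ℝ)*s⌉₊:ℝ)/((k+K:ℕ):ℝ)) atTop (nhds s) :=
    hbs.comp hshift
  have hud' : Tendsto (fun k : ℕ => coordSum n (toR n (seqA n p (k+K))) / ((k+K:ℕ):ℝ)) atTop (nhds 1) :=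
    hud.comp hshift
  have hvd' : Tendsto (fun k : ℕ => coordSum n (toR n (seqA n q (k+K))) / ((k+K:ℕ):ℝ)) atTop (nhds 1) :=
    hvd.comp hshift
  have hAc' : ∀ i, Tendsto (fun k : ℕ => toR n (seqA n p (k+K)) i / ((k+K:ℕ):ℝ)) atTop (nhds (p i)) :=
    fun i => (seqA_coord_div n p i (hppos' i)).comp hshift
  have hBc' : ∀ i, Tendsto (fun k : ℕ => toR n (seqA n q (k+K)) i / ((k+K:ℕ):ℝ)) atTop (nhds (q i)) :=
    fun i => (seqA_coord_div n q i (hqpos' i)).comp hshift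
  have hkKne : ∀ k : ℕ, ((k+K:ℕ):ℝ) ≠ 0 := by
    intro k
    have h2 : (1:ℝ) ≤ ((k+K:ℕ):ℝ) := by exact_mod_cast hkK1 k
    linarith
  -- w / (k+K)^2 → 1
  have hw2 : Tendsto (fun k : ℕ =>
      coordSum n (toR n (⌈((k+K:ℕ):ℝ)*t⌉₊ • seqA n p (k+K) + ⌈((k+K:ℕ):ℝ)*s⌉₊ • seqA n q (k+K)))
        / ((k+K:ℕ):ℝ)^2) atTop (nhds 1) := by
    have base := (hat'.mul hud').add (hbs'.mul hvd')
    have hlim : t*1 + s*1 = 1 := by rw [mul_one, mul_one]; exact hts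
    rw [hlim] at base
    apply base.congr
    intro k
    rw [hwEq k, div_mul_div_comm, div_mul_div_comm, ← add_div, ← sq]
  -- direction of the combined sequence
  have hwdir : Tendsto (fun k : ℕ =>
      (coordSum n (toR n (⌈((k+K:ℕ):ℝ)*t⌉₊ • seqA n p (k+K) + ⌈((k+K:ℕ):ℝ)*s⌉₊ • seqA n q (k+K))))⁻¹
        • toR n (⌈((k+K:ℕ):ℝ)*t⌉₊ • seqA n p (k+K) + ⌈((k+K:ℕ):ℝ)*s⌉₊ • seqA n q (k+K)))
      atTop (nhds (t • p + s • q)) := by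
    apply tendsto_euclid
    intro i
    have num := (hat'.mul (hAc' i)).add (hbs'.mul (hBc' i))
    have hdiv := num.div hw2 one_ne_zero
    rw [div_one] at hdiv
    have htarget : (t • p + s • q) i = t * p i + s * q i := by
      simp [PiLp.add_apply, PiLp.smul_apply, smul_eq_mul]
    rw [htarget]
    apply hdiv.congr
    intro k
    have hXi : toR n (⌈((k+K:ℕ):ℝ)*t⌉₊ • seqA n p (k+K) + ⌈((k+K:ℕ):ℝ)*s⌉₊ • seqA n q (k+K)) i
        = (⌈((k+K:ℕ):ℝ)*t⌉₊:ℝ) * toR n (seqA n p (k+K)) i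
          + (⌈((k+K:ℕ):ℝ)*s⌉₊:ℝ) * toR n (seqA n q (k+K)) i := by
      rw [toR_comb]
      simp [PiLp.add_apply, PiLp.smul_apply, smul_eq_mul]
    simp only [Pi.div_apply, PiLp.smul_apply, smul_eq_mul]
    rw [hXi, hwEq k, div_mul_div_comm, div_mul_div_comm, ← add_div, ← sq,
      div_div_div_cancel_right₀, div_eq_inv_mul]
    exact pow_ne_zero 2 (hkKne k)
  -- w → ∞
  have hwT : Tendsto (fun k : ℕ =>
      coordSum n (toR n (⌈((k+K:ℕ):ℝ)*t⌉₊ • seqA n p (k+K) + ⌈((k+K:ℕ):ℝ)*s⌉₊ • seqA n q (k+K))))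
      atTop atTop := by
    apply tendsto_atTop_mono hw_ge
    exact tendsto_natCast_atTop_atTop.comp hshift
  -- the three limits from `hc`
  have hFp := hc p ⟨hpO, hp1, hppos⟩ (fun k => seqA n p (k+K))
    (fun k => by simpa using key k 1 0 (by norm_num)) (huT.comp hshift) (hudir.comp hshift)
  have hFq := hc q ⟨hqO, hq1, hqpos⟩ (fun k => seqA n q (k+K))
    (fun k => by simpa using key k 0 1 (by norm_num)) (hvT.comp hshift) (hvdir.comp hshift)
  have hrO : t • p + s • q ∈ O := hO_conv hpO hqO ht hs hts
  have hr1 : ∑ i, (t • p + s • q) i = 1 := by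
    simp only [PiLp.add_apply, PiLp.smul_apply, smul_eq_mul]
    rw [Finset.sum_add_distrib, ← Finset.mul_sum, ← Finset.mul_sum, hp1, hq1]
    rw [mul_one, mul_one]; exact hts
  have hrpos : ∀ i, 0 < (t • p + s • q) i := by
    intro i
    simp only [PiLp.add_apply, PiLp.smul_apply, smul_eq_mul]
    have h1 := mul_pos ht' (hppos i)
    nlinarith [mul_nonneg hs (hqpos i).le]
  have hFr := hc (t • p + s • q) ⟨hrO, hr1, hrpos⟩
    (fun k => ⌈((k+K:ℕ):ℝ)*t⌉₊ • seqA n p (k+K) + ⌈((k+K:ℕ):ℝ)*s⌉₊ • seqA n q (k+K))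
    (fun k => key k _ _ (by have := hak1 k; omega)) hwT hwdir
  -- weights converge
  have hau : Tendsto (fun k : ℕ => (⌈((k+K:ℕ):ℝ)*t⌉₊:ℝ) * coordSum n (toR n (seqA n p (k+K)))
      / coordSum n (toR n (⌈((k+K:ℕ):ℝ)*t⌉₊ • seqA n p (k+K) + ⌈((k+K:ℕ):ℝ)*s⌉₊ • seqA n q (k+K))))
      atTop (nhds t) := by
    have base := (hat'.mul hud').div hw2 one_ne_zero
    rw [mul_one, div_one] at base
    apply base.congr
    intro k
    simp only [Pi.div_apply]
    rw [div_mul_div_comm, ← sq, div_div_div_cancel_right₀]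
    exact pow_ne_zero 2 (hkKne k)
  have hbv : Tendsto (fun k : ℕ => (⌈((k+K:ℕ):ℝ)*s⌉₊:ℝ) * coordSum n (toR n (seqA n q (k+K)))
      / coordSum n (toR n (⌈((k+K:ℕ):ℝ)*t⌉₊ • seqA n p (k+K) + ⌈((k+K:ℕ):ℝ)*s⌉₊ • seqA n q (k+K))))
      atTop (nhds s) := by
    have base := (hbs'.mul hvd').div hw2 one_ne_zero
    rw [mul_one, div_one] at base
    apply base.congr
    intro k
    simp only [Pi.div_apply]
    rw [div_mul_div_comm, ← sq, div_div_div_cancel_right₀]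
    exact pow_ne_zero 2 (hkKne k)
  have hRlim := (hau.mul hFp).add (hbv.mul hFq)
  have hineq : ∀ k : ℕ,
      F (⌈((k+K:ℕ):ℝ)*t⌉₊ • seqA n p (k+K) + ⌈((k+K:ℕ):ℝ)*s⌉₊ • seqA n q (k+K))
        / coordSum n (toR n (⌈((k+K:ℕ):ℝ)*t⌉₊ • seqA n p (k+K) + ⌈((k+K:ℕ):ℝ)*s⌉₊ • seqA n q (k+K)))
      ≤ (⌈((k+K:ℕ):ℝ)*t⌉₊:ℝ) * coordSum n (toR n (seqA n p (k+K)))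
          / coordSum n (toR n (⌈((k+K:ℕ):ℝ)*t⌉₊ • seqA n p (k+K) + ⌈((k+K:ℕ):ℝ)*s⌉₊ • seqA n q (k+K)))
          * (F (seqA n p (k+K)) / coordSum n (toR n (seqA n p (k+K))))
        + (⌈((k+K:ℕ):ℝ)*s⌉₊:ℝ) * coordSum n (toR n (seqA n q (k+K)))
          / coordSum n (toR n (⌈((k+K:ℕ):ℝ)*t⌉₊ • seqA n p (k+K) + ⌈((k+K:ℕ):ℝ)*s⌉₊ • seqA n q (k+K)))
          * (F (seqA n q (k+K)) / coordSum n (toR n (seqA n q (k+K)))) := by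
    intro k
    have h1 := iter (seqA n p (k+K)) (seqA n q (k+K)) (key k) ⌈((k+K:ℕ):ℝ)*t⌉₊ ⌈((k+K:ℕ):ℝ)*s⌉₊
      (by have := hak1 k; omega)
    rw [← combo_div _ _ _ _ _ _ _ (hu_pos k).ne' (hv_pos k).ne' (hw_pos k).ne']
    gcongr
    exact (hw_pos k).le
  exact le_of_tendsto_of_tendsto' hFr hRlim hineq
end

section
/- Let Γ ⊆ ℕ^{n+1} be a subsemigroup which generates ℤ^{n+1} as a group, and let F : Γ → ℝ be subadditive and locally linearly bounded from below. Let c[F] : Σ(Γ)° ∩ Σ^0 → ℝ be the function given by the limits c[F](p) = lim F(α(k))/|α(k)| over sequences α(k) ∈ Γ with |α(k)| → ∞ and α(k)/|α(k)| → p, extended one-homogeneously to Σ(Γ)° by c[F](x) := |x|·c[F](x/|x|). Then c[F] equals on Σ(Γ)° the convex envelope P(F), i.e. for every x ∈ Σ(Γ)°, c[F](x) = sup{λ(x) : λ : ℝ^{n+1} → ℝ linear and λ(α) ≤ F(α) for all α ∈ Γ ∩ Σ(Γ)°}. -/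
open Set Filter

/-- The smallest closed convex cone containing a set `S` in `ℝ^{n+1}`. -/
def closedConvexCone (n : ℕ) (S : Set (EuclideanSpace ℝ (Fin (n + 1)))) :
    Set (EuclideanSpace ℝ (Fin (n + 1))) :=
  ⋂₀ {C | S ⊆ C ∧ IsClosed C ∧ Convex ℝ C ∧ ∀ c : ℝ, 0 ≤ c → ∀ x ∈ C, c • x ∈ C}

/-- The convex envelope `P(F)(x)`: the supremum of `λ(x)` over all linear functions `λ`
dominated by `F` on `Γ ∩ Σ(Γ)°`. -/
noncomputable def convexEnvelope (n : ℕ) (Γ : Set (Fin (n + 1) → ℕ))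
    (F : (Fin (n + 1) → ℕ) → ℝ) (x : EuclideanSpace ℝ (Fin (n + 1))) : ℝ :=
  sSup {y : ℝ | ∃ lam : EuclideanSpace ℝ (Fin (n + 1)) →ₗ[ℝ] ℝ,
    (∀ α ∈ Γ, toR n α ∈ interior (closedConvexCone n (toR n '' Γ)) → lam (toR n α) ≤ F α) ∧
    y = lam x}

set_option linter.dupNamespace false
set_option maxHeartbeats 1000000

namespace Cheb
open Pointwise

variable {n : ℕ}

lemma toR_add (α β : Fin (n+1) → ℕ) : toR n (α + β) = toR n α + toR n β := by
  ext i; simp [toR]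

lemma toR_nsmul (m : ℕ) (α : Fin (n+1) → ℕ) : toR n (m • α) = (m : ℝ) • toR n α := by
  ext i; simp [toR]

lemma coordSum_add (x y : EuclideanSpace ℝ (Fin (n+1))) :
    coordSum n (x + y) = coordSum n x + coordSum n y := by
  simp [coordSum, Finset.sum_add_distrib]

lemma coordSum_smul (r : ℝ) (x : EuclideanSpace ℝ (Fin (n+1))) :
    coordSum n (r • x) = r * coordSum n x := by
  simp [coordSum, Finset.mul_sum]

lemma continuous_coordSum : Continuous (coordSum n) :=
  continuous_finset_sum _ fun i _ => PiLp.continuous_apply 2 _ i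

lemma coordSum_toR_pos {α : Fin (n+1) → ℕ} (h : α ≠ 0) : 1 ≤ coordSum n (toR n α) := by
  have : ∃ i, α i ≠ 0 := by
    by_contra hc; push_neg at hc; exact h (funext hc)
  obtain ⟨i, hi⟩ := this
  have h1 : (1:ℝ) ≤ (α i : ℝ) := by exact_mod_cast Nat.one_le_iff_ne_zero.mpr hi
  have h2 : (α i : ℝ) ≤ ∑ j, (α j : ℝ) :=
    Finset.single_le_sum (f := fun j => (α j : ℝ)) (fun j _ => by positivity) (Finset.mem_univ i)
  exact le_trans h1 h2

lemma coordSum_toR_nonneg (α : Fin (n+1) → ℕ) : 0 ≤ coordSum n (toR n α) :=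
  Finset.sum_nonneg fun i _ => by simp [toR]


lemma cone_mem_family (S : Set (EuclideanSpace ℝ (Fin (n+1)))) :
    S ⊆ closedConvexCone n S ∧ IsClosed (closedConvexCone n S) ∧
    Convex ℝ (closedConvexCone n S) ∧
    ∀ c : ℝ, 0 ≤ c → ∀ x ∈ closedConvexCone n S, c • x ∈ closedConvexCone n S := by
  refine ⟨fun s hs => fun C hC => hC.1 hs, ?_, ?_, ?_⟩
  · exact isClosed_sInter fun C hC => hC.2.1
  · exact convex_sInter fun C hC => hC.2.2.1
  · intro c hc x hx C hC
    exact hC.2.2.2 c hc x (hx C hC)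

lemma cone_subset_orthant (Γ : Set (Fin (n+1) → ℕ)) :
    closedConvexCone n (toR n '' Γ) ⊆ {x | ∀ i, 0 ≤ x i} := by
  intro x hx
  refine hx _ ⟨?_, ?_, ?_, ?_⟩
  · rintro _ ⟨α, _, rfl⟩ i; simp [toR]
  · have : ({x : EuclideanSpace ℝ (Fin (n+1)) | ∀ i, 0 ≤ x i}) = ⋂ i, {x | 0 ≤ x i} := by
      ext y; simp
    rw [this]
    exact isClosed_iInter fun i => isClosed_le continuous_const (PiLp.continuous_apply 2 _ i)
  · intro y hy z hz a b ha hb hab i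
    have := hy i; have := hz i
    have : (a • y + b • z) i = a * y i + b * z i := by
      simp [PiLp.add_apply, PiLp.smul_apply]
    rw [this]; positivity
  · intro c hc y hy i
    have : (c • y) i = c * y i := by simp [PiLp.smul_apply]
    rw [this]; exact mul_nonneg hc (hy i)

lemma interior_pos {Γ : Set (Fin (n+1) → ℕ)} {x : EuclideanSpace ℝ (Fin (n+1))}
    (hx : x ∈ interior (closedConvexCone n (toR n '' Γ))) : ∀ i, 0 < x i := by
  intro i
  have h1 : x ∈ interior {y : EuclideanSpace ℝ (Fin (n+1)) | ∀ i, 0 ≤ y i} :=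
    interior_mono (cone_subset_orthant Γ) hx
  obtain ⟨ε, hε, hball⟩ := Metric.isOpen_iff.1 isOpen_interior x h1
  have hx2 : x - (ε/2) • EuclideanSpace.single i (1:ℝ) ∈ Metric.ball x ε := by
    rw [Metric.mem_ball, dist_eq_norm]
    have heq : x - (ε/2) • EuclideanSpace.single i (1:ℝ) - x = -((ε/2) • EuclideanSpace.single i (1:ℝ)) := by abel
    rw [heq, norm_neg, norm_smul, EuclideanSpace.norm_single]
    rw [Real.norm_eq_abs, abs_of_pos (half_pos hε), norm_one, mul_one]; linarith
  have h3 := interior_subset (hball hx2) i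
  have h4 : (x - (ε/2) • EuclideanSpace.single i (1:ℝ)) i = x i - ε/2 := by
    simp [PiLp.sub_apply, PiLp.smul_apply, EuclideanSpace.single_apply]
  rw [h4] at h3
  linarith

lemma interior_smul {Γ : Set (Fin (n+1) → ℕ)} {x : EuclideanSpace ℝ (Fin (n+1))} {r : ℝ}
    (hr : 0 < r) (hx : x ∈ interior (closedConvexCone n (toR n '' Γ))) :
    r • x ∈ interior (closedConvexCone n (toR n '' Γ)) := by
  set C := closedConvexCone n (toR n '' Γ)
  have hsm := (cone_mem_family (toR n '' Γ)).2.2.2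
  have hmap : (fun y => r • y) '' interior C ⊆ C := by
    rintro _ ⟨y, hy, rfl⟩
    exact hsm r hr.le y (interior_subset hy)
  have hopen : IsOpen ((fun y => r • y) '' interior C) :=
    (Homeomorph.smulOfNeZero r hr.ne').isOpenMap _ isOpen_interior
  exact interior_maximal hmap hopen ⟨x, hx, rfl⟩

lemma nsmul_mem (Γ : AddSubsemigroup (Fin (n+1) → ℕ)) {β : Fin (n+1) → ℕ} (hβ : β ∈ Γ) :
    ∀ m : ℕ, 1 ≤ m → m • β ∈ Γ := by
  intro m hm
  induction m with
  | zero => omega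
  | succ k ih =>
    rcases Nat.lt_or_ge 1 (k+1) with h|h
    · have hk : 1 ≤ k := by omega
      have := Γ.add_mem (ih hk) hβ
      rw [succ_nsmul]; exact this
    · have : k = 0 := by omega
      subst this; simpa using hβ

def Dset (n : ℕ) (Γ : AddSubsemigroup (Fin (n+1) → ℕ)) : Set (EuclideanSpace ℝ (Fin (n+1))) :=
  {x | ∃ r : ℝ, 0 ≤ r ∧ ∃ β ∈ Γ, x = r • toR n β}

lemma ceil_coeff_tendsto (r : ℝ) (hr : 0 ≤ r) :
    Filter.Tendsto (fun k : ℕ => ((⌈r*(k+1)⌉₊ + 1 : ℕ) : ℝ)/(k+1)) atTop (nhds r) := by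
  have hlow : ∀ k : ℕ, r ≤ ((⌈r*(k+1)⌉₊ + 1 : ℕ) : ℝ)/(k+1) := by
    intro k
    have hk : (0:ℝ) < k + 1 := by positivity
    rw [le_div_iff₀ hk]
    have := Nat.le_ceil (r*(k+1))
    push_cast
    linarith
  have hhigh : ∀ k : ℕ, ((⌈r*(k+1)⌉₊ + 1 : ℕ) : ℝ)/(k+1) ≤ r + 2/(k+1) := by
    intro k
    have hk : (0:ℝ) < k + 1 := by positivity
    have hexp : (r + 2/((k:ℝ)+1))*((k:ℝ)+1) = r*((k:ℝ)+1) + 2 := by field_simp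
    rw [div_le_iff₀ hk, hexp]
    have h2 : (⌈r*(k+1)⌉₊ : ℝ) < r*(k+1) + 1 := Nat.ceil_lt_add_one (by positivity)
    push_cast
    push_cast at h2
    linarith
  have hupper : Filter.Tendsto (fun k : ℕ => r + 2/(k+1 : ℝ)) atTop (nhds r) := by
    have h0 : Filter.Tendsto (fun k : ℕ => 2/(k+1 : ℝ)) atTop (nhds 0) := by
      have := tendsto_one_div_add_atTop_nhds_zero_nat (𝕜 := ℝ)
      have h2 := this.const_mul (2:ℝ)
      simpa [div_eq_mul_inv, mul_comm, mul_assoc, mul_left_comm] using h2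
    simpa using (tendsto_const_nhds (x := r)).add h0
  exact tendsto_of_tendsto_of_tendsto_of_le_of_le tendsto_const_nhds hupper hlow hhigh

lemma smul_add_mem_closure_D (Γ : AddSubsemigroup (Fin (n+1) → ℕ))
    {r s : ℝ} (hr : 0 ≤ r) (hs : 0 ≤ s) {β γ : Fin (n+1) → ℕ} (hβ : β ∈ Γ) (hγ : γ ∈ Γ) :
    r • toR n β + s • toR n γ ∈ closure (Dset n Γ) := by
  rw [mem_closure_iff_seq_limit]
  refine ⟨fun k => ((k:ℝ)+1)⁻¹ • toR n ((⌈r*(k+1)⌉₊+1) • β + (⌈s*(k+1)⌉₊+1) • γ), ?_, ?_⟩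
  · intro k
    exact ⟨((k:ℝ)+1)⁻¹, by positivity,
      _, Γ.add_mem (nsmul_mem Γ hβ _ (by omega)) (nsmul_mem Γ hγ _ (by omega)), rfl⟩
  · have heq : ∀ k : ℕ, ((k:ℝ)+1)⁻¹ • toR n ((⌈r*(k+1)⌉₊+1) • β + (⌈s*(k+1)⌉₊+1) • γ)
        = (((⌈r*(k+1)⌉₊ + 1 : ℕ):ℝ)/(k+1)) • toR n β + (((⌈s*(k+1)⌉₊ + 1 : ℕ):ℝ)/(k+1)) • toR n γ := by
      intro k
      rw [toR_add, toR_nsmul, toR_nsmul, smul_add, smul_smul, smul_smul]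
      push_cast
      rw [div_eq_inv_mul, div_eq_inv_mul]
    simp only [heq]
    exact ((ceil_coeff_tendsto r hr).smul_const (toR n β)).add
      ((ceil_coeff_tendsto s hs).smul_const (toR n γ))

lemma closure_D_props (Γ : AddSubsemigroup (Fin (n+1) → ℕ)) (hne : (Γ : Set (Fin (n+1) → ℕ)).Nonempty) :
    (toR n '' (Γ : Set (Fin (n+1) → ℕ))) ⊆ closure (Dset n Γ) ∧ IsClosed (closure (Dset n Γ)) ∧
    Convex ℝ (closure (Dset n Γ)) ∧
    ∀ c : ℝ, 0 ≤ c → ∀ x ∈ closure (Dset n Γ), c • x ∈ closure (Dset n Γ) := by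
  refine ⟨?_, isClosed_closure, ?_, ?_⟩
  · rintro _ ⟨α, hα, rfl⟩
    exact subset_closure ⟨1, zero_le_one, α, hα, (one_smul _ _).symm⟩
  · intro x hx y hy a b ha hb hab
    obtain ⟨u, hu, hux⟩ := mem_closure_iff_seq_limit.1 hx
    obtain ⟨v, hv, hvy⟩ := mem_closure_iff_seq_limit.1 hy
    have hmem : ∀ k, a • u k + b • v k ∈ closure (Dset n Γ) := by
      intro k
      obtain ⟨r, hr, β, hβ, hrβ⟩ := hu k
      obtain ⟨s, hs, γ, hγ, hsγ⟩ := hv k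
      rw [hrβ, hsγ, smul_smul, smul_smul]
      exact smul_add_mem_closure_D Γ (by positivity) (by positivity) hβ hγ
    have hlim : Filter.Tendsto (fun k => a • u k + b • v k) atTop (nhds (a • x + b • y)) :=
      (hux.const_smul a).add (hvy.const_smul b)
    exact isClosed_closure.mem_of_tendsto hlim (Filter.Eventually.of_forall hmem)
  · intro c hc x hx
    obtain ⟨u, hu, hux⟩ := mem_closure_iff_seq_limit.1 hx
    have hmem : ∀ k, c • u k ∈ Dset n Γ := by
      intro k
      obtain ⟨r, hr, β, hβ, hrβ⟩ := hu k
      exact ⟨c*r, by positivity, β, hβ, by rw [hrβ, smul_smul]⟩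
    exact mem_closure_iff_seq_limit.2 ⟨_, hmem, hux.const_smul c⟩

lemma cone_subset_closure_D (Γ : AddSubsemigroup (Fin (n+1) → ℕ)) (hne : (Γ : Set (Fin (n+1) → ℕ)).Nonempty) :
    closedConvexCone n (toR n '' (Γ : Set (Fin (n+1) → ℕ))) ⊆ closure (Dset n Γ) := by
  intro x hx
  exact hx _ (closure_D_props Γ hne)

/-- The density lemma: every interior point of the cone with coordinate sum 1 is the limit of
normalized elements of Γ whose coordinate sums tend to infinity. -/
lemma density (Γ : AddSubsemigroup (Fin (n+1) → ℕ)) (hne : (Γ : Set (Fin (n+1) → ℕ)).Nonempty)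
    {p : EuclideanSpace ℝ (Fin (n+1))}
    (hp : p ∈ interior (closedConvexCone n (toR n '' (Γ : Set (Fin (n+1) → ℕ)))))
    (hp1 : coordSum n p = 1) :
    ∃ α : ℕ → (Fin (n+1) → ℕ), (∀ k, α k ∈ Γ) ∧
      Filter.Tendsto (fun k => coordSum n (toR n (α k))) atTop atTop ∧
      Filter.Tendsto (fun k => (coordSum n (toR n (α k)))⁻¹ • toR n (α k)) atTop (nhds p) := by
  have hpD : p ∈ closure (Dset n Γ) := cone_subset_closure_D Γ hne (interior_subset hp)
  obtain ⟨d, hd, hdp⟩ := mem_closure_iff_seq_limit.1 hpD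
  -- coordSum d k → 1
  have hcs : Filter.Tendsto (fun k => coordSum n (d k)) atTop (nhds 1) := by
    have := (continuous_coordSum.tendsto p).comp hdp
    rwa [hp1] at this
  -- eventually coordSum (d k) > 1/2
  have hev : ∀ᶠ k in atTop, (1:ℝ)/2 < coordSum n (d k) :=
    hcs.eventually (eventually_gt_nhds (by norm_num))
  obtain ⟨N, hN⟩ := hev.exists_forall_of_atTop
  -- for k ≥ N, pick the data
  choose r hr β hβ hd' using hd
  have hβne : ∀ k, N ≤ k → β k ≠ 0 := by
    intro k hk h0
    have := hN k hk
    rw [hd' k, coordSum_smul, h0] at this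
    simp [toR, coordSum] at this
    linarith
  have hrpos : ∀ k, N ≤ k → 0 < r k := by
    intro k hk
    rcases (hr k).lt_or_eq with h|h
    · exact h
    · exfalso
      have := hN k hk
      rw [hd' k, coordSum_smul, ← h] at this
      norm_num at this
  -- normalized d k tends to p
  have hnorm : Filter.Tendsto (fun k => (coordSum n (d k))⁻¹ • d k) atTop (nhds p) := by
    have h1 : Filter.Tendsto (fun k => (coordSum n (d k))⁻¹) atTop (nhds 1) := by
      have := hcs.inv₀ (by norm_num)
      simpa using this
    have := h1.smul hdp
    simpa using this
  refine ⟨fun k => (k+1) • β (k + N), ?_, ?_, ?_⟩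
  · intro k; exact nsmul_mem Γ (hβ (k+N)) _ (by omega)
  · -- coordSum → ∞
    have hbig : ∀ k : ℕ, (k:ℝ)+1 ≤ coordSum n (toR n ((k+1) • β (k + N))) := by
      intro k
      rw [toR_nsmul, coordSum_smul]
      have h1 : 1 ≤ coordSum n (toR n (β (k+N))) := coordSum_toR_pos (hβne (k+N) (by omega))
      push_cast
      nlinarith [Nat.cast_nonneg (α := ℝ) k]
    apply tendsto_atTop_mono hbig
    have : Filter.Tendsto (fun k : ℕ => (k:ℝ)) atTop atTop := tendsto_natCast_atTop_atTop
    exact tendsto_atTop_add_const_right _ 1 this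
  · -- normalized sequence
    have hkey : ∀ k : ℕ, (coordSum n (toR n ((k+1) • β (k + N))))⁻¹ • toR n ((k+1) • β (k + N))
        = (coordSum n (d (k+N)))⁻¹ • d (k+N) := by
      intro k
      have hS : 0 < coordSum n (toR n (β (k+N))) :=
        lt_of_lt_of_le one_pos (coordSum_toR_pos (hβne (k+N) (by omega)))
      rw [toR_nsmul, coordSum_smul, hd' (k+N), coordSum_smul]
      rw [mul_inv, smul_smul, mul_inv, smul_smul]
      have hk1 : ((k:ℝ)+1) ≠ 0 := by positivity
      have hrk : r (k+N) ≠ 0 := (hrpos (k+N) (by omega)).ne'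
      push_cast
      field_simp
    simp only [hkey]
    exact hnorm.comp (tendsto_add_atTop_nat N)

set_option maxHeartbeats 1000000 in
lemma exists_subgradient (O : Set (EuclideanSpace ℝ (Fin (n+1)))) (hO : IsOpen O)
    (hOconv : Convex ℝ O) (f : EuclideanSpace ℝ (Fin (n+1)) → ℝ)
    (hconv : ∀ x ∈ O, ∀ y ∈ O, ∀ a b : ℝ, 0 ≤ a → 0 ≤ b → a + b = 1 →
      f (a • x + b • y) ≤ a * f x + b * f y)
    (x : EuclideanSpace ℝ (Fin (n+1))) (hx : x ∈ O)
    (hhalf : (2⁻¹ : ℝ) • x ∈ O) (hfhalf : f ((2⁻¹ : ℝ) • x) = 2⁻¹ * f x)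
    (hdouble : (2 : ℝ) • x ∈ O) (hfdouble : f ((2 : ℝ) • x) = 2 * f x) :
    ∃ g : EuclideanSpace ℝ (Fin (n+1)) →ₗ[ℝ] ℝ, g x = f x ∧ ∀ y ∈ O, g y ≤ f y := by
  classical
  set Q : EuclideanSpace ℝ (Fin (n+1)) → Set ℝ :=
    fun v => {z | ∃ t : ℝ, 0 < t ∧ x + t • v ∈ O ∧ z = (f (x + t • v) - f x)/t} with hQdef
  have hstep : ∀ v : EuclideanSpace ℝ (Fin (n+1)), ∃ t : ℝ, 0 < t ∧ x + t • v ∈ O := by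
    intro v
    have hcont : Continuous fun t : ℝ => x + t • v := by continuity
    have htend : Filter.Tendsto (fun t : ℝ => x + t • v) (nhds 0) (nhds x) := by
      have := hcont.tendsto 0; simpa using this
    have hev : ∀ᶠ t : ℝ in nhds 0, x + t • v ∈ O := htend.eventually (hO.eventually_mem hx)
    have hev' : ∀ᶠ t : ℝ in nhdsWithin 0 (Ioi 0), x + t • v ∈ O :=
      hev.filter_mono nhdsWithin_le_nhds
    have hpos : ∀ᶠ t : ℝ in nhdsWithin 0 (Ioi 0), 0 < t := eventually_mem_nhdsWithin
    obtain ⟨t, ht1, ht2⟩ := (hev'.and hpos).exists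
    exact ⟨t, ht2, ht1⟩
  have hQne : ∀ v : EuclideanSpace ℝ (Fin (n+1)), (Q v).Nonempty := by
    intro v
    obtain ⟨t, ht, hmem⟩ := hstep v
    exact ⟨_, t, ht, hmem, rfl⟩
  -- three-point inequality: lower bound for the difference quotients
  have hthree : ∀ v : EuclideanSpace ℝ (Fin (n+1)), ∀ s t : ℝ, 0 < s → 0 < t → x - s • v ∈ O → x + t • v ∈ O →
      (f x - f (x - s • v))/s ≤ (f (x + t • v) - f x)/t := by
    intro v s t hs ht hms hmt
    have hst : 0 < s + t := by linarith
    have ha : (0:ℝ) ≤ s/(s+t) := by positivity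
    have hb : (0:ℝ) ≤ t/(s+t) := by positivity
    have hab : s/(s+t) + t/(s+t) = 1 := by field_simp
    have hcomb : (s/(s+t)) • (x + t • v) + (t/(s+t)) • (x - s • v) = x := by
      match_scalars <;> field_simp <;> ring
    have hineq := hconv _ hmt _ hms _ _ ha hb hab
    rw [hcomb] at hineq
    rw [div_le_div_iff₀ hs ht]
    set A := f (x + t • v); set B := f (x - s • v); set C := f x
    have hexp : (s/(s+t) * A + t/(s+t) * B) * (s+t) = s * A + t * B := by field_simp
    have h2 := mul_le_mul_of_nonneg_right hineq hst.le
    rw [hexp] at h2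
    nlinarith
  have hQbdd : ∀ v : EuclideanSpace ℝ (Fin (n+1)), BddBelow (Q v) := by
    intro v
    obtain ⟨s, hs, hms⟩ := hstep (-v)
    have hms' : x - s • v ∈ O := by
      rwa [smul_neg, ← sub_eq_add_neg] at hms
    refine ⟨(f x - f (x - s • v))/s, ?_⟩
    rintro z ⟨t, ht, hmt, rfl⟩
    exact hthree v s t hs ht hms' hmt
  set d : EuclideanSpace ℝ (Fin (n+1)) → ℝ := fun v => sInf (Q v) with hddef
  -- monotonicity of difference quotients
  have hmono : ∀ v : EuclideanSpace ℝ (Fin (n+1)), ∀ t t' : ℝ, 0 < t → t ≤ t' → x + t' • v ∈ O →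
      x + t • v ∈ O ∧ (f (x + t • v) - f x)/t ≤ (f (x + t' • v) - f x)/t' := by
    intro v t t' ht htt' hmem
    have ht' : 0 < t' := lt_of_lt_of_le ht htt'
    have ha : (0:ℝ) ≤ t/t' := by positivity
    have hb : (0:ℝ) ≤ 1 - t/t' := by
      have : t/t' ≤ 1 := by rw [div_le_one ht']; exact htt'
      linarith
    have hab : t/t' + (1 - t/t') = 1 := by ring
    have hcomb : (t/t') • (x + t' • v) + (1 - t/t') • x = x + t • v := by
      match_scalars <;> field_simp <;> ring
    have hmemt : x + t • v ∈ O := by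
      rw [← hcomb]; exact hOconv hmem hx ha hb hab
    refine ⟨hmemt, ?_⟩
    have hineq := hconv _ hmem _ hx _ _ ha hb hab
    rw [hcomb] at hineq
    rw [div_le_div_iff₀ ht ht']
    set A := f (x + t' • v); set C := f x
    have hexp : (t/t' * A + (1 - t/t') * C) * t' = t * A + (t' - t) * C := by field_simp
    have h2 := mul_le_mul_of_nonneg_right hineq ht'.le
    rw [hexp] at h2
    nlinarith
  -- subadditivity of d
  have hd_add : ∀ v w : EuclideanSpace ℝ (Fin (n+1)), d (v + w) ≤ d v + d w := by
    intro v w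
    refine le_of_forall_pos_le_add ?_
    intro ε hε
    have hv : sInf (Q v) < d v + ε/2 := by
      have : d v < d v + ε/2 := by simp [hddef]; linarith
      exact this
    obtain ⟨z1, hz1mem, hz1lt⟩ := (csInf_lt_iff (hQbdd v) (hQne v)).1 hv
    have hw : sInf (Q w) < d w + ε/2 := by
      have : d w < d w + ε/2 := by simp [hddef]; linarith
      exact this
    obtain ⟨z2, hz2mem, hz2lt⟩ := (csInf_lt_iff (hQbdd w) (hQne w)).1 hw
    obtain ⟨t1, ht1, hm1, rfl⟩ := hz1mem
    obtain ⟨t2, ht2, hm2, rfl⟩ := hz2mem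
    set t := min t1 t2 / 2 with htdef
    have ht : 0 < t := by positivity
    have h2t1 : 2*t ≤ t1 := by
      have := min_le_left t1 t2; rw [htdef]; linarith
    have h2t2 : 2*t ≤ t2 := by
      have := min_le_right t1 t2; rw [htdef]; linarith
    obtain ⟨hmv, hqv⟩ := hmono v (2*t) t1 (by linarith) h2t1 hm1
    obtain ⟨hmw, hqw⟩ := hmono w (2*t) t2 (by linarith) h2t2 hm2
    -- midpoint
    have hmid : (2⁻¹:ℝ) • (x + (2*t) • v) + (2⁻¹:ℝ) • (x + (2*t) • w) = x + t • (v + w) := by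
      match_scalars <;> ring
    have hmemmid : x + t • (v + w) ∈ O := by
      rw [← hmid]
      exact hOconv hmv hmw (by norm_num) (by norm_num) (by norm_num)
    have hq : (f (x + t • (v+w)) - f x)/t
        ≤ (f (x + (2*t) • v) - f x)/(2*t) + (f (x + (2*t) • w) - f x)/(2*t) := by
      have hineq := hconv _ hmv _ hmw (2⁻¹) (2⁻¹) (by norm_num) (by norm_num) (by norm_num)
      rw [hmid] at hineq
      rw [← add_div, div_le_div_iff₀ ht (by linarith : (0:ℝ) < 2*t)]
      nlinarith
    have hdle : d (v+w) ≤ (f (x + t • (v+w)) - f x)/t :=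
      csInf_le (hQbdd _) ⟨t, ht, hmemmid, rfl⟩
    calc d (v+w) ≤ (f (x + t • (v+w)) - f x)/t := hdle
      _ ≤ (f (x + (2*t) • v) - f x)/(2*t) + (f (x + (2*t) • w) - f x)/(2*t) := hq
      _ ≤ (f (x + t1 • v) - f x)/t1 + (f (x + t2 • w) - f x)/t2 := add_le_add hqv hqw
      _ ≤ (d v + ε/2) + (d w + ε/2) := add_le_add hz1lt.le hz2lt.le
      _ = d v + d w + ε := by ring
  -- positive homogeneity of d
  have hd_hom : ∀ a : ℝ, 0 < a → ∀ v : EuclideanSpace ℝ (Fin (n+1)), d (a • v) = a * d v := by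
    intro a ha v
    have hQ : Q (a • v) = a • Q v := by
      ext z
      constructor
      · rintro ⟨t, ht, hmem, rfl⟩
        refine ⟨(f (x + (t*a) • v) - f x)/(t*a), ⟨t*a, by positivity, ?_, rfl⟩, ?_⟩
        · rwa [← smul_smul]
        · show a • ((f (x + (t*a) • v) - f x)/(t*a)) = (f (x + t • (a • v)) - f x)/t
          rw [smul_smul, smul_eq_mul]
          field_simp
      · rintro ⟨z', ⟨t, ht, hmem, rfl⟩, rfl⟩
        refine ⟨t/a, by positivity, ?_, ?_⟩
        · rwa [smul_smul, div_mul_cancel₀ _ ha.ne']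
        · show a • ((f (x + t • v) - f x)/t) = (f (x + (t/a) • (a • v)) - f x)/(t/a)
          rw [smul_smul, div_mul_cancel₀ _ ha.ne', smul_eq_mul]
          field_simp
      
    show sInf (Q (a • v)) = a * sInf (Q v)
    rw [hQ, Real.sInf_smul_of_nonneg ha.le, smul_eq_mul]
  -- Hahn–Banach
  have hd0 : (0:ℝ) ≤ d 0 := by
    have := hd_add 0 0
    simp at this
    linarith [this]
  obtain ⟨g, hg0, hgle⟩ := exists_extension_of_le_sublinear ⟨⊥, 0⟩ d
    (fun a ha v => hd_hom a ha v) hd_add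
    (by
      rintro ⟨z, hz⟩
      have : z = 0 := Submodule.mem_bot ℝ |>.1 hz
      simp [this]
      exact hd0)
  -- g(y - x) ≤ f y - f x for y ∈ O
  have hkey : ∀ y ∈ O, g y ≤ f y + (g x - f x) := by
    intro y hy
    have h1 : d (y - x) ≤ f y - f x := by
      refine csInf_le (hQbdd _) ⟨1, one_pos, ?_, by simp⟩
      simpa using hy
    have h2 : g (y - x) ≤ d (y - x) := hgle _
    have h3 : g (y - x) = g y - g x := by rw [map_sub]
    linarith
  -- g x = f x
  have hgxle : g x ≤ f x := by
    have h := hkey _ hdouble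
    rw [hfdouble, map_smul, smul_eq_mul] at h
    linarith
  have hgxge : f x ≤ g x := by
    have h := hkey _ hhalf
    rw [hfhalf, map_smul, smul_eq_mul] at h
    linarith
  have hgx : g x = f x := le_antisymm hgxle hgxge
  exact ⟨g, hgx, fun y hy => by have := hkey y hy; rw [hgx] at this; linarith⟩

lemma coordSum_pos_of_interior {Γ : Set (Fin (n+1) → ℕ)} {x : EuclideanSpace ℝ (Fin (n+1))}
    (hx : x ∈ interior (closedConvexCone n (toR n '' Γ))) : 0 < coordSum n x :=
  Finset.sum_pos (fun i _ => interior_pos hx i) Finset.univ_nonempty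

lemma mem_Sigma0_of_interior {Γ : Set (Fin (n+1) → ℕ)} {x : EuclideanSpace ℝ (Fin (n+1))}
    (hx : x ∈ interior (closedConvexCone n (toR n '' Γ))) (hx1 : coordSum n x = 1) :
    x ∈ Sigma0 n :=
  ⟨hx1, interior_pos hx⟩

lemma F_nsmul (Γ : AddSubsemigroup (Fin (n+1) → ℕ)) (F : (Fin (n+1) → ℕ) → ℝ)
    (hsub : ∀ α ∈ Γ, ∀ β ∈ Γ, F (α + β) ≤ F α + F β) {α : Fin (n+1) → ℕ} (hα : α ∈ Γ) :
    ∀ m : ℕ, 1 ≤ m → F (m • α) ≤ m * F α := by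
  intro m hm
  induction m with
  | zero => omega
  | succ k ih =>
    rcases Nat.lt_or_ge 1 (k+1) with h|h
    · have hk : 1 ≤ k := by omega
      have h1 := hsub _ (nsmul_mem Γ hα k hk) _ hα
      have h2 := ih hk
      rw [succ_nsmul]
      push_cast
      calc F (k • α + α) ≤ F (k • α) + F α := h1
        _ ≤ k * F α + F α := by linarith
        _ = ((k:ℝ) + 1) * F α := by ring
    · have hk0 : k = 0 := by omega
      subst hk0; simpa using le_refl (F α)

section CProps
variable (Γ : AddSubsemigroup (Fin (n+1) → ℕ)) (F : (Fin (n+1) → ℕ) → ℝ)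
  (c : EuclideanSpace ℝ (Fin (n+1)) → ℝ)

lemma c_homog
    (hc_hom : ∀ x ∈ interior (closedConvexCone n (toR n '' (Γ : Set (Fin (n + 1) → ℕ)))),
      c x = coordSum n x * c ((coordSum n x)⁻¹ • x))
    {x : EuclideanSpace ℝ (Fin (n+1))}
    (hx : x ∈ interior (closedConvexCone n (toR n '' (Γ : Set (Fin (n + 1) → ℕ)))))
    {s : ℝ} (hs : 0 < s) : c (s • x) = s * c x := by
  have hS : 0 < coordSum n x := coordSum_pos_of_interior hx
  have h1 := hc_hom x hx
  have h2 := hc_hom (s • x) (interior_smul hs hx)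
  rw [coordSum_smul] at h2
  have h3 : ((s * coordSum n x)⁻¹ • s • x) = (coordSum n x)⁻¹ • x := by
    rw [smul_smul]
    congr 1
    field_simp
  rw [h3] at h2
  rw [h2, h1]; ring

lemma c_le_F
    (hsub : ∀ α ∈ Γ, ∀ β ∈ Γ, F (α + β) ≤ F α + F β)
    (hc_limit : ∀ p ∈ interior (closedConvexCone n (toR n '' (Γ : Set (Fin (n + 1) → ℕ)))) ∩
        Sigma0 n,
      ∀ α : ℕ → (Fin (n + 1) → ℕ),
        (∀ k, α k ∈ Γ) →
        Tendsto (fun k => coordSum n (toR n (α k))) atTop atTop →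
        Tendsto (fun k => (coordSum n (toR n (α k)))⁻¹ • toR n (α k)) atTop (nhds p) →
        Tendsto (fun k => F (α k) / coordSum n (toR n (α k))) atTop (nhds (c p)))
    (hc_hom : ∀ x ∈ interior (closedConvexCone n (toR n '' (Γ : Set (Fin (n + 1) → ℕ)))),
      c x = coordSum n x * c ((coordSum n x)⁻¹ • x))
    {α : Fin (n+1) → ℕ} (hα : α ∈ Γ)
    (hαO : toR n α ∈ interior (closedConvexCone n (toR n '' (Γ : Set (Fin (n + 1) → ℕ))))) :
    c (toR n α) ≤ F α := by
  set S := coordSum n (toR n α) with hSdef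
  have hS : 0 < S := coordSum_pos_of_interior hαO
  set p := S⁻¹ • toR n α with hpdef
  have hpO : p ∈ interior (closedConvexCone n (toR n '' (Γ : Set (Fin (n + 1) → ℕ)))) :=
    interior_smul (inv_pos.2 hS) hαO
  have hp1 : coordSum n p = 1 := by
    rw [hpdef, coordSum_smul, ← hSdef, inv_mul_cancel₀ hS.ne']
  -- the sequence k ↦ (k+1) • α
  have hcs : ∀ k : ℕ, coordSum n (toR n ((k+1) • α)) = ((k:ℝ)+1) * S := by
    intro k
    rw [toR_nsmul, coordSum_smul, ← hSdef]
    push_cast; ring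
  have htop : Tendsto (fun k : ℕ => coordSum n (toR n ((k+1) • α))) atTop atTop := by
    simp only [hcs]
    exact Tendsto.atTop_mul_const hS (tendsto_atTop_add_const_right _ 1 tendsto_natCast_atTop_atTop)
  have hnorm : ∀ k : ℕ, (coordSum n (toR n ((k+1) • α)))⁻¹ • toR n ((k+1) • α) = p := by
    intro k
    rw [hcs k, toR_nsmul, smul_smul, hpdef]
    push_cast
    rw [mul_inv]
    congr 1
    have : ((k:ℝ)+1) ≠ 0 := by positivity
    field_simp
  have hlim := hc_limit p ⟨hpO, mem_Sigma0_of_interior hpO hp1⟩ (fun k => (k+1) • α)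
    (fun k => nsmul_mem Γ hα _ (by omega)) htop
    (by simp only [hnorm]; exact tendsto_const_nhds)
  have hbound : ∀ k : ℕ, F ((k+1) • α) / coordSum n (toR n ((k+1) • α)) ≤ F α / S := by
    intro k
    rw [hcs k]
    have h1 : F ((k+1) • α) ≤ ((k:ℝ)+1) * F α := by
      have := F_nsmul Γ F hsub hα (k+1) (by omega)
      push_cast at this
      exact this
    have hk : (0:ℝ) < (k:ℝ)+1 := by positivity
    calc F ((k+1) • α) / (((k:ℝ)+1) * S) ≤ (((k:ℝ)+1) * F α) / (((k:ℝ)+1) * S) := by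
          apply div_le_div_of_nonneg_right h1 (by positivity) |>.trans_eq rfl
      _ = F α / S := by rw [mul_div_mul_left _ _ hk.ne']
  have hcp : c p ≤ F α / S := le_of_tendsto hlim (Filter.Eventually.of_forall hbound)
  have := hc_hom (toR n α) hαO
  rw [← hSdef, ← hpdef] at this
  rw [this]
  calc S * c p ≤ S * (F α / S) := by exact mul_le_mul_of_nonneg_left hcp hS.le
    _ = F α := by field_simp

end CProps
lemma ceil_ratio_tendsto {r : ℝ} (hr : 0 ≤ r) {B : ℕ → ℝ} (hB : ∀ k, 1 ≤ B k) :
    Tendsto (fun k : ℕ => ((⌈r*((k:ℝ)+1)*(B k)⌉₊ + 1 : ℕ):ℝ)/(((k:ℝ)+1) * B k)) atTop (nhds r) := by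
  have hB0 : ∀ k, (0:ℝ) < B k := fun k => lt_of_lt_of_le one_pos (hB k)
  have hden : ∀ k : ℕ, (0:ℝ) < ((k:ℝ)+1) * B k := fun k => by
    have := hB0 k; positivity
  have hlow : ∀ k : ℕ, r ≤ ((⌈r*((k:ℝ)+1)*(B k)⌉₊ + 1 : ℕ):ℝ)/(((k:ℝ)+1) * B k) := by
    intro k
    rw [le_div_iff₀ (hden k)]
    have h1 := Nat.le_ceil (r*((k:ℝ)+1)*(B k))
    push_cast
    nlinarith
  have hhigh : ∀ k : ℕ, ((⌈r*((k:ℝ)+1)*(B k)⌉₊ + 1 : ℕ):ℝ)/(((k:ℝ)+1) * B k) ≤ r + 2/((k:ℝ)+1) := by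
    intro k
    rw [div_le_iff₀ (hden k)]
    have hk1 : (0:ℝ) < (k:ℝ)+1 := by positivity
    have h2 : (⌈r*((k:ℝ)+1)*(B k)⌉₊ : ℝ) < r*((k:ℝ)+1)*(B k) + 1 :=
      Nat.ceil_lt_add_one (by have := hB0 k; positivity)
    have hexp : (r + 2/((k:ℝ)+1)) * (((k:ℝ)+1) * B k) = r*((k:ℝ)+1)*(B k) + 2 * B k := by
      field_simp
    rw [hexp]
    have h3 := hB k
    push_cast
    nlinarith
  have hupper : Tendsto (fun k : ℕ => r + 2/((k:ℝ)+1)) atTop (nhds r) := by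
    have h0 : Tendsto (fun k : ℕ => 2/((k:ℝ)+1)) atTop (nhds 0) := by
      have h2 := tendsto_one_div_add_atTop_nhds_zero_nat.const_mul (2:ℝ)
      simpa [div_eq_mul_inv, mul_comm, mul_assoc, mul_left_comm] using h2
    simpa using (tendsto_const_nhds (x := r)).add h0
  exact tendsto_of_tendsto_of_tendsto_of_le_of_le tendsto_const_nhds hupper hlow hhigh

lemma aux_frac (M A U Fa : ℝ) (hA : A ≠ 0) (hU : U ≠ 0) :
    (M * A)/U * (Fa/A) = M * Fa / U := by
  field_simp

lemma c_convex_combo (Γ : AddSubsemigroup (Fin (n+1) → ℕ))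
    (hne : (Γ : Set (Fin (n+1) → ℕ)).Nonempty)
    (F : (Fin (n+1) → ℕ) → ℝ) (c : EuclideanSpace ℝ (Fin (n+1)) → ℝ)
    (hsub : ∀ α ∈ Γ, ∀ β ∈ Γ, F (α + β) ≤ F α + F β)
    (hc_limit : ∀ p ∈ interior (closedConvexCone n (toR n '' (Γ : Set (Fin (n + 1) → ℕ)))) ∩
        Sigma0 n,
      ∀ α : ℕ → (Fin (n + 1) → ℕ),
        (∀ k, α k ∈ Γ) →
        Tendsto (fun k => coordSum n (toR n (α k))) atTop atTop →
        Tendsto (fun k => (coordSum n (toR n (α k)))⁻¹ • toR n (α k)) atTop (nhds p) →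
        Tendsto (fun k => F (α k) / coordSum n (toR n (α k))) atTop (nhds (c p)))
    {p q : EuclideanSpace ℝ (Fin (n+1))}
    (hp : p ∈ interior (closedConvexCone n (toR n '' (Γ : Set (Fin (n + 1) → ℕ)))))
    (hp1 : coordSum n p = 1)
    (hq : q ∈ interior (closedConvexCone n (toR n '' (Γ : Set (Fin (n + 1) → ℕ)))))
    (hq1 : coordSum n q = 1) {t : ℝ} (ht0 : 0 < t) (ht1 : t < 1) :
    c (t • p + (1-t) • q) ≤ t * c p + (1-t) * c q := by
  have ht1' : 0 < 1 - t := by linarith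
  obtain ⟨a0, ha0Γ, ha0S, ha0N⟩ := density Γ hne hp hp1
  obtain ⟨b0, hb0Γ, hb0S, hb0N⟩ := density Γ hne hq hq1
  have ha0F := hc_limit p ⟨hp, mem_Sigma0_of_interior hp hp1⟩ a0 ha0Γ ha0S ha0N
  have hb0F := hc_limit q ⟨hq, mem_Sigma0_of_interior hq hq1⟩ b0 hb0Γ hb0S hb0N
  obtain ⟨N, hN⟩ :=
    ((ha0S.eventually_ge_atTop 1).and (hb0S.eventually_ge_atTop 1)).exists_forall_of_atTop
  set a : ℕ → (Fin (n+1) → ℕ) := fun k => a0 (k+N) with hadef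
  set b : ℕ → (Fin (n+1) → ℕ) := fun k => b0 (k+N) with hbdef
  set A : ℕ → ℝ := fun k => coordSum n (toR n (a k)) with hAdef
  set B : ℕ → ℝ := fun k => coordSum n (toR n (b k)) with hBdef
  have haΓ : ∀ k, a k ∈ Γ := fun k => ha0Γ _
  have hbΓ : ∀ k, b k ∈ Γ := fun k => hb0Γ _
  have hA1 : ∀ k, 1 ≤ A k := fun k => (hN (k+N) (Nat.le_add_left N k)).1
  have hB1 : ∀ k, 1 ≤ B k := fun k => (hN (k+N) (Nat.le_add_left N k)).2
  have hA0 : ∀ k, (0:ℝ) < A k := fun k => lt_of_lt_of_le one_pos (hA1 k)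
  have hB0 : ∀ k, (0:ℝ) < B k := fun k => lt_of_lt_of_le one_pos (hB1 k)
  have haN : Tendsto (fun k => (A k)⁻¹ • toR n (a k)) atTop (nhds p) :=
    ha0N.comp (tendsto_add_atTop_nat N)
  have hbN : Tendsto (fun k => (B k)⁻¹ • toR n (b k)) atTop (nhds q) :=
    hb0N.comp (tendsto_add_atTop_nat N)
  have haF : Tendsto (fun k => F (a k) / A k) atTop (nhds (c p)) :=
    ha0F.comp (tendsto_add_atTop_nat N)
  have hbF : Tendsto (fun k => F (b k) / B k) atTop (nhds (c q)) :=
    hb0F.comp (tendsto_add_atTop_nat N)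
  -- integer weights
  set m : ℕ → ℕ := fun k => ⌈t*((k:ℝ)+1)*(B k)⌉₊ + 1 with hmdef
  set l : ℕ → ℕ := fun k => ⌈(1-t)*((k:ℝ)+1)*(A k)⌉₊ + 1 with hldef
  set γ : ℕ → (Fin (n+1) → ℕ) := fun k => m k • a k + l k • b k with hγdef
  have hγΓ : ∀ k, γ k ∈ Γ :=
    fun k => Γ.add_mem (nsmul_mem Γ (haΓ k) _ (by simp only [hmdef]; omega)) (nsmul_mem Γ (hbΓ k) _ (by simp only [hldef]; omega))
  set u : ℕ → ℝ := fun k => (m k : ℝ) * A k with hudef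
  set v : ℕ → ℝ := fun k => (l k : ℝ) * B k with hvdef
  have hm1 : ∀ k, (1:ℝ) ≤ (m k : ℝ) := fun k => by
    have : 1 ≤ m k := by simp only [hmdef]; omega
    exact_mod_cast this
  have hl1 : ∀ k, (1:ℝ) ≤ (l k : ℝ) := fun k => by
    have : 1 ≤ l k := by simp only [hldef]; omega
    exact_mod_cast this
  have hu0 : ∀ k, (0:ℝ) < u k := fun k => by
    have := hm1 k; have := hA0 k; simp only [hudef]; positivity
  have hv0 : ∀ k, (0:ℝ) < v k := fun k => by
    have := hl1 k; have := hB0 k; simp only [hvdef]; positivity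
  have huv0 : ∀ k, (0:ℝ) < u k + v k := fun k => by linarith [hu0 k, hv0 k]
  have htoRγ : ∀ k, toR n (γ k) = (m k:ℝ) • toR n (a k) + (l k:ℝ) • toR n (b k) := by
    intro k
    rw [hγdef]
    simp only
    rw [toR_add, toR_nsmul, toR_nsmul]
  have hcoordγ : ∀ k, coordSum n (toR n (γ k)) = u k + v k := by
    intro k
    rw [htoRγ k, coordSum_add, coordSum_smul, coordSum_smul]
  -- ratio limits
  set W : ℕ → ℝ := fun k => ((k:ℝ)+1) * A k * B k with hWdef
  have hW0 : ∀ k, (0:ℝ) < W k := fun k => by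
    have := hA0 k; have := hB0 k; simp only [hWdef]; positivity
  have htu : Tendsto (fun k => u k / W k) atTop (nhds t) := by
    have hcancel : ∀ k, u k / W k = ((m k : ℕ):ℝ)/(((k:ℝ)+1) * B k) := by
      intro k
      rw [hudef, hWdef]
      simp only
      rw [div_eq_div_iff (hW0 k).ne' (by have := hB0 k; positivity)]
      ring
    simp only [hcancel]
    exact ceil_ratio_tendsto ht0.le hB1
  have htv : Tendsto (fun k => v k / W k) atTop (nhds (1-t)) := by
    have hcancel : ∀ k, v k / W k = ((l k : ℕ):ℝ)/(((k:ℝ)+1) * A k) := by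
      intro k
      rw [hvdef, hWdef]
      simp only
      rw [div_eq_div_iff (hW0 k).ne' (by have := hA0 k; positivity)]
      ring
    simp only [hcancel]
    exact ceil_ratio_tendsto ht1'.le hA1
  have hsum1 : Tendsto (fun k => (u k + v k) / W k) atTop (nhds 1) := by
    have h := htu.add htv
    simp only [← add_div] at h
    have he : t + (1-t) = 1 := by ring
    rwa [he] at h
  have hρu : Tendsto (fun k => u k / (u k + v k)) atTop (nhds t) := by
    have h := htu.div hsum1 one_ne_zero
    have heq : (fun k => u k / W k) / (fun k => (u k + v k) / W k)
        = fun k => u k / (u k + v k) := by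
      funext k
      simp only [Pi.div_apply]
      rw [div_div_div_cancel_right₀ (hW0 k).ne']
    rw [heq] at h
    simpa using h
  have hρv : Tendsto (fun k => v k / (u k + v k)) atTop (nhds (1-t)) := by
    have h := htv.div hsum1 one_ne_zero
    have heq : (fun k => v k / W k) / (fun k => (u k + v k) / W k)
        = fun k => v k / (u k + v k) := by
      funext k
      simp only [Pi.div_apply]
      rw [div_div_div_cancel_right₀ (hW0 k).ne']
    rw [heq] at h
    simpa using h
  -- coordSum of γ tends to infinity
  have htopγ : Tendsto (fun k => coordSum n (toR n (γ k))) atTop atTop := by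
    simp only [hcoordγ]
    apply tendsto_atTop_mono (f := fun k : ℕ => t * ((k:ℝ)+1))
    · intro k
      have h1 := Nat.le_ceil (t*((k:ℝ)+1)*(B k))
      have h2 : (⌈t*((k:ℝ)+1)*(B k)⌉₊ : ℝ) + 1 ≤ (m k : ℝ) := by
        rw [hmdef]; push_cast; simp
      have h3 : t * ((k:ℝ)+1) ≤ t*((k:ℝ)+1)*(B k) := by
        have := hB1 k
        have hk1 : (0:ℝ) ≤ t * ((k:ℝ)+1) := by positivity
        nlinarith
      have h4 : t*((k:ℝ)+1)*(B k) ≤ u k := by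
        rw [hudef]
        simp only
        have := hA1 k
        nlinarith [hm1 k, le_trans h1 (by linarith : (⌈t*((k:ℝ)+1)*(B k)⌉₊:ℝ) ≤ (m k:ℝ) - 1)]
      linarith [hv0 k]
    · exact Tendsto.const_mul_atTop ht0
        (tendsto_atTop_add_const_right _ 1 tendsto_natCast_atTop_atTop)
  -- normalized γ tends to the convex combination
  have hnormγ : Tendsto (fun k => (coordSum n (toR n (γ k)))⁻¹ • toR n (γ k)) atTop
      (nhds (t • p + (1-t) • q)) := by
    have hpt : ∀ k, (coordSum n (toR n (γ k)))⁻¹ • toR n (γ k)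
        = (u k/(u k + v k)) • ((A k)⁻¹ • toR n (a k))
          + (v k/(u k + v k)) • ((B k)⁻¹ • toR n (b k)) := by
      intro k
      rw [hcoordγ k, htoRγ k, smul_add, smul_smul, smul_smul, smul_smul, smul_smul]
      congr 1
      · congr 1
        have hu : u k = (m k:ℝ) * A k := rfl
        rw [div_mul_eq_mul_div, hu, mul_assoc, mul_inv_cancel₀ (hA0 k).ne', mul_one,
          inv_mul_eq_div]
      · congr 1
        have hv : v k = (l k:ℝ) * B k := rfl
        rw [div_mul_eq_mul_div, hv, mul_assoc, mul_inv_cancel₀ (hB0 k).ne', mul_one,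
          inv_mul_eq_div]
    simp only [hpt]
    exact (hρu.smul haN).add (hρv.smul hbN)
  -- the limit point is in the interior and Sigma0
  have hOconv : Convex ℝ (interior (closedConvexCone n (toR n '' (Γ : Set (Fin (n+1) → ℕ))))) :=
    (cone_mem_family _).2.2.1.interior
  have hwO : t • p + (1-t) • q ∈
      interior (closedConvexCone n (toR n '' (Γ : Set (Fin (n+1) → ℕ)))) :=
    hOconv hp hq ht0.le ht1'.le (by ring)
  have hw1 : coordSum n (t • p + (1-t) • q) = 1 := by
    rw [coordSum_add, coordSum_smul, coordSum_smul, hp1, hq1]; ring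
  have hlimγ := hc_limit _ ⟨hwO, mem_Sigma0_of_interior hwO hw1⟩ γ hγΓ htopγ hnormγ
  -- upper bound on the quotients
  have hFbound : ∀ k, F (γ k) / coordSum n (toR n (γ k))
      ≤ (u k/(u k + v k)) * (F (a k)/A k) + (v k/(u k + v k)) * (F (b k)/B k) := by
    intro k
    have hFγ : F (γ k) ≤ (m k:ℝ) * F (a k) + (l k:ℝ) * F (b k) := by
      calc F (γ k) ≤ F (m k • a k) + F (l k • b k) :=
            hsub _ (nsmul_mem Γ (haΓ k) _ (by simp only [hmdef]; omega)) _
              (nsmul_mem Γ (hbΓ k) _ (by simp only [hldef]; omega))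
        _ ≤ (m k:ℝ) * F (a k) + (l k:ℝ) * F (b k) :=
            add_le_add (F_nsmul Γ F hsub (haΓ k) _ (by simp only [hmdef]; omega))
              (F_nsmul Γ F hsub (hbΓ k) _ (by simp only [hldef]; omega))
    have h1 : u k/(u k + v k) * (F (a k)/A k) = (m k:ℝ) * F (a k)/(u k + v k) := by
      have hu : u k = (m k:ℝ) * A k := rfl
      rw [hu]
      exact aux_frac _ _ _ _ (hA0 k).ne' (huv0 k).ne'
    have h2 : v k/(u k + v k) * (F (b k)/B k) = (l k:ℝ) * F (b k)/(u k + v k) := by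
      have hv : v k = (l k:ℝ) * B k := rfl
      rw [hv]
      exact aux_frac _ _ _ _ (hB0 k).ne' (huv0 k).ne'
    have hrhs : (u k/(u k + v k)) * (F (a k)/A k) + (v k/(u k + v k)) * (F (b k)/B k)
        = ((m k:ℝ) * F (a k) + (l k:ℝ) * F (b k))/(u k + v k) := by
      rw [h1, h2, ← add_div]
    rw [hcoordγ k, hrhs]
    exact div_le_div_of_nonneg_right hFγ (huv0 k).le
  have hRHS : Tendsto (fun k => (u k/(u k + v k)) * (F (a k)/A k)
      + (v k/(u k + v k)) * (F (b k)/B k)) atTop (nhds (t * c p + (1-t) * c q)) :=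
    (hρu.mul haF).add (hρv.mul hbF)
  exact le_of_tendsto_of_tendsto' hlimγ hRHS hFbound


end Cheb

open Cheb in
/-- The one-homogeneous extension of the Chebyshev transform `c[F]` to `Σ(Γ)°` coincides
there with the convex envelope `P(F)`. -/
theorem chebyshev_transform_eq_convexEnvelope (n : ℕ) (Γ : AddSubsemigroup (Fin (n + 1) → ℕ))
    (hgen : AddSubgroup.closure
      ((fun α : Fin (n + 1) → ℕ => fun i => (α i : ℤ)) '' (Γ : Set (Fin (n + 1) → ℕ))) = ⊤)
    (F : (Fin (n + 1) → ℕ) → ℝ)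
    (hsub : ∀ α ∈ Γ, ∀ β ∈ Γ, F (α + β) ≤ F α + F β)
    (hlow : ∀ p ∈ interior (closedConvexCone n (toR n '' (Γ : Set (Fin (n + 1) → ℕ)))),
      ∃ O' : Set (EuclideanSpace ℝ (Fin (n + 1))),
        IsOpen O' ∧ Convex ℝ O' ∧ (∀ c : ℝ, 0 < c → ∀ x ∈ O', c • x ∈ O') ∧ p ∈ O' ∧
        ∃ lam : EuclideanSpace ℝ (Fin (n + 1)) →ₗ[ℝ] ℝ,
          ∀ α ∈ Γ, toR n α ∈ O' → lam (toR n α) ≤ F α)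
    (c : EuclideanSpace ℝ (Fin (n + 1)) → ℝ)
    (hc_limit : ∀ p ∈ interior (closedConvexCone n (toR n '' (Γ : Set (Fin (n + 1) → ℕ)))) ∩
        Sigma0 n,
      ∀ α : ℕ → (Fin (n + 1) → ℕ),
        (∀ k, α k ∈ Γ) →
        Tendsto (fun k => coordSum n (toR n (α k))) atTop atTop →
        Tendsto (fun k => (coordSum n (toR n (α k)))⁻¹ • toR n (α k)) atTop (nhds p) →
        Tendsto (fun k => F (α k) / coordSum n (toR n (α k))) atTop (nhds (c p)))
    (hc_hom : ∀ x ∈ interior (closedConvexCone n (toR n '' (Γ : Set (Fin (n + 1) → ℕ)))),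
      c x = coordSum n x * c ((coordSum n x)⁻¹ • x)) :
    ∀ x ∈ interior (closedConvexCone n (toR n '' (Γ : Set (Fin (n + 1) → ℕ)))),
      c x = convexEnvelope n (Γ : Set (Fin (n + 1) → ℕ)) F x := by
  -- Γ is nonempty
  have hne : (Γ : Set (Fin (n+1) → ℕ)).Nonempty := by
    by_contra h
    rw [Set.not_nonempty_iff_eq_empty] at h
    rw [h, Set.image_empty, AddSubgroup.closure_empty] at hgen
    have h1 : (fun _ : Fin (n+1) => (1:ℤ)) ∈ (⊤ : AddSubgroup (Fin (n+1) → ℤ)) :=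
      AddSubgroup.mem_top _
    rw [← hgen, AddSubgroup.mem_bot] at h1
    have := congrFun h1 0
    norm_num at this
  -- convexity of the interior of the cone
  have hOconv : Convex ℝ (interior (closedConvexCone n (toR n '' (Γ : Set (Fin (n+1) → ℕ))))) :=
    (cone_mem_family _).2.2.1.interior
  -- subadditivity of c on the interior
  have hc_subadd : ∀ x ∈ interior (closedConvexCone n (toR n '' (Γ : Set (Fin (n+1) → ℕ)))),
      ∀ y ∈ interior (closedConvexCone n (toR n '' (Γ : Set (Fin (n+1) → ℕ)))),
      c (x + y) ≤ c x + c y := by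
    intro x hx y hy
    have hSx : 0 < coordSum n x := coordSum_pos_of_interior hx
    have hSy : 0 < coordSum n y := coordSum_pos_of_interior hy
    set Sx := coordSum n x
    set Sy := coordSum n y
    set p := Sx⁻¹ • x with hpdef
    set q := Sy⁻¹ • y with hqdef
    have hpO : p ∈ interior (closedConvexCone n (toR n '' (Γ : Set (Fin (n+1) → ℕ)))) :=
      interior_smul (inv_pos.2 hSx) hx
    have hqO : q ∈ interior (closedConvexCone n (toR n '' (Γ : Set (Fin (n+1) → ℕ)))) :=
      interior_smul (inv_pos.2 hSy) hy
    have hp1 : coordSum n p = 1 := by rw [hpdef, coordSum_smul, inv_mul_cancel₀ hSx.ne']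
    have hq1 : coordSum n q = 1 := by rw [hqdef, coordSum_smul, inv_mul_cancel₀ hSy.ne']
    set t := Sx / (Sx + Sy) with htdef
    have hSxy : 0 < Sx + Sy := by linarith
    have ht0 : 0 < t := by rw [htdef]; positivity
    have ht1 : t < 1 := by
      rw [htdef, div_lt_one hSxy]; linarith
    have h1mt : 1 - t = Sy / (Sx + Sy) := by rw [htdef]; field_simp; ring
    have hcombo := c_convex_combo Γ hne F c hsub hc_limit hpO hp1 hqO hq1 ht0 ht1
    set w := t • p + (1-t) • q with hwdef
    have hwO : w ∈ interior (closedConvexCone n (toR n '' (Γ : Set (Fin (n+1) → ℕ)))) :=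
      hOconv hpO hqO ht0.le (by linarith) (by ring)
    have hxy : x + y = (Sx + Sy) • w := by
      rw [hwdef, hpdef, hqdef, htdef]
      match_scalars <;> field_simp <;> ring
    have hcxy : c (x + y) = (Sx + Sy) * c w := by
      rw [hxy]; exact c_homog Γ c hc_hom hwO hSxy
    have hcx : c x = Sx * c p := by
      have := hc_hom x hx; rwa [← hpdef] at this
    have hcy : c y = Sy * c q := by
      have := hc_hom y hy; rwa [← hqdef] at this
    rw [hcxy, hcx, hcy]
    calc (Sx + Sy) * c w ≤ (Sx + Sy) * (t * c p + (1-t) * c q) :=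
          mul_le_mul_of_nonneg_left hcombo hSxy.le
      _ = Sx * c p + Sy * c q := by
          rw [h1mt, htdef]; field_simp
  -- convex-combination inequality for c
  have hconv : ∀ x ∈ interior (closedConvexCone n (toR n '' (Γ : Set (Fin (n+1) → ℕ)))),
      ∀ y ∈ interior (closedConvexCone n (toR n '' (Γ : Set (Fin (n+1) → ℕ)))),
      ∀ a b : ℝ, 0 ≤ a → 0 ≤ b → a + b = 1 →
      c (a • x + b • y) ≤ a * c x + b * c y := by
    intro x hx y hy a b ha hb hab
    rcases eq_or_lt_of_le ha with ha' | ha'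
    · have hb1 : b = 1 := by linarith
      rw [← ha', hb1]
      simp
    · rcases eq_or_lt_of_le hb with hb' | hb'
      · have ha1 : a = 1 := by linarith
        rw [← hb', ha1]
        simp
      · calc c (a • x + b • y) ≤ c (a • x) + c (b • y) :=
              hc_subadd _ (interior_smul ha' hx) _ (interior_smul hb' hy)
          _ = a * c x + b * c y := by
              rw [c_homog Γ c hc_hom hx ha', c_homog Γ c hc_hom hy hb']
  -- main argument
  intro x hx
  have hSx : 0 < coordSum n x := coordSum_pos_of_interior hx
  obtain ⟨g, hgx, hgle⟩ := exists_subgradient _ isOpen_interior hOconv c hconv x hx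
    (interior_smul (by norm_num) hx) (c_homog Γ c hc_hom hx (by norm_num))
    (interior_smul (by norm_num) hx) (c_homog Γ c hc_hom hx (by norm_num))
  have henv_le : ∀ lam : EuclideanSpace ℝ (Fin (n+1)) →ₗ[ℝ] ℝ,
      (∀ α ∈ (Γ : Set (Fin (n+1) → ℕ)),
        toR n α ∈ interior (closedConvexCone n (toR n '' (Γ : Set (Fin (n+1) → ℕ)))) →
        lam (toR n α) ≤ F α) →
      lam x ≤ c x := by
    intro lam hadm
    set p := (coordSum n x)⁻¹ • x with hpdef
    have hpO : p ∈ interior (closedConvexCone n (toR n '' (Γ : Set (Fin (n+1) → ℕ)))) :=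
      interior_smul (inv_pos.2 hSx) hx
    have hp1 : coordSum n p = 1 := by rw [hpdef, coordSum_smul, inv_mul_cancel₀ hSx.ne']
    obtain ⟨α, hαΓ, hαS, hαN⟩ := density Γ hne hpO hp1
    have hαF := hc_limit p ⟨hpO, mem_Sigma0_of_interior hpO hp1⟩ α hαΓ hαS hαN
    have hlamcont : Continuous lam := lam.continuous_of_finiteDimensional
    have hlamlim : Tendsto (fun k => lam ((coordSum n (toR n (α k)))⁻¹ • toR n (α k))) atTop
        (nhds (lam p)) := (hlamcont.tendsto p).comp hαN
    have hev1 : ∀ᶠ k in atTop, (0:ℝ) < coordSum n (toR n (α k)) := hαS.eventually_gt_atTop 0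
    have hev2 : ∀ᶠ k in atTop, (coordSum n (toR n (α k)))⁻¹ • toR n (α k) ∈
        interior (closedConvexCone n (toR n '' (Γ : Set (Fin (n+1) → ℕ)))) :=
      hαN.eventually (isOpen_interior.eventually_mem hpO)
    have hevle : ∀ᶠ k in atTop, lam ((coordSum n (toR n (α k)))⁻¹ • toR n (α k))
        ≤ F (α k) / coordSum n (toR n (α k)) := by
      filter_upwards [hev1, hev2] with k hk1 hk2
      have hmem : toR n (α k) ∈
          interior (closedConvexCone n (toR n '' (Γ : Set (Fin (n+1) → ℕ)))) := by
        have := interior_smul hk1 hk2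
        rwa [smul_inv_smul₀ hk1.ne'] at this
      have h4 := hadm (α k) (hαΓ k) hmem
      rw [map_smul, smul_eq_mul, div_eq_inv_mul]
      exact mul_le_mul_of_nonneg_left h4 (inv_nonneg.2 hk1.le)
    have hlp : lam p ≤ c p := le_of_tendsto_of_tendsto hlamlim hαF hevle
    have hxp : x = coordSum n x • p := by rw [hpdef, smul_inv_smul₀ hSx.ne']
    have h5 : lam x = coordSum n x * lam p := by
      conv_lhs => rw [hxp]
      rw [map_smul, smul_eq_mul]
    have h6 : c x = coordSum n x * c p := hc_hom x hx
    rw [h5, h6]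
    exact mul_le_mul_of_nonneg_left hlp hSx.le
  have hgadm : ∀ α ∈ (Γ : Set (Fin (n+1) → ℕ)),
      toR n α ∈ interior (closedConvexCone n (toR n '' (Γ : Set (Fin (n+1) → ℕ)))) →
      g (toR n α) ≤ F α := by
    intro α hα hαO
    exact le_trans (hgle _ hαO) (c_le_F Γ F c hsub hc_limit hc_hom hα hαO)
  rw [convexEnvelope]
  have hmem : c x ∈ {y : ℝ | ∃ lam : EuclideanSpace ℝ (Fin (n + 1)) →ₗ[ℝ] ℝ,
      (∀ α ∈ (Γ : Set (Fin (n+1) → ℕ)),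
        toR n α ∈ interior (closedConvexCone n (toR n '' (Γ : Set (Fin (n+1) → ℕ)))) →
        lam (toR n α) ≤ F α) ∧ c x = lam x} := ⟨g, hgadm, hgx.symm⟩
  have hub : ∀ y ∈ {y : ℝ | ∃ lam : EuclideanSpace ℝ (Fin (n + 1)) →ₗ[ℝ] ℝ,
      (∀ α ∈ (Γ : Set (Fin (n+1) → ℕ)),
        toR n α ∈ interior (closedConvexCone n (toR n '' (Γ : Set (Fin (n+1) → ℕ)))) →
        lam (toR n α) ≤ F α) ∧ y = lam x}, y ≤ c x := by
    rintro y ⟨lam, hadm, rfl⟩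
    exact henv_le lam hadm
  exact le_antisymm (le_csSup ⟨c x, hub⟩ hmem) (csSup_le ⟨c x, hmem⟩ hub)
end

section
/- Let K be an infinite compact subset of ℂ. For k ≥ 1 let Y_k(K) := inf{ sup_{z ∈ K} |p(z)| : p a monic polynomial over ℂ of degree k }, and for k ≥ 2 let T_k(K) := sup{ ∏_{1 ≤ i < j ≤ k} |x_i − x_j| : x_1, …, x_k ∈ K }. Then there exists a real number c ≥ 0 such that Y_k(K)^{1/k} → c as k → ∞ and T_k(K)^{1/\binom{k}{2}} → c as k → ∞; in particular the Chebyshev constant C(K) := lim_k Y_k(K)^{1/k} and the transfinite diameter T(K) := lim_k T_k(K)^{1/\binom{k}{2}} both exist and are equal. -/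
open Set Filter Polynomial

/-- The `k`-th Chebyshev quantity `Y_k(K)`: the infimum over monic polynomials of degree
`k` of the sup of `|p|` on `K`. -/
noncomputable def chebY (K : Set ℂ) (k : ℕ) : ℝ :=
  sInf {y : ℝ | ∃ p : Polynomial ℂ, p.Monic ∧ p.natDegree = k ∧
    y = sSup ((fun z => ‖p.eval z‖) '' K)}

/-- The `k`-th diameter quantity `T_k(K)`: the supremum over `k`-tuples of points of `K`
of the product of their mutual distances. -/
noncomputable def diamT (K : Set ℂ) (k : ℕ) : ℝ :=
  sSup {y : ℝ | ∃ x : Fin k → ℂ, (∀ i, x i ∈ K) ∧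
    y = ∏ i, ∏ j ∈ Finset.univ.filter (fun j => i < j), ‖x i - x j‖}

noncomputable def normK (K : Set ℂ) (p : Polynomial ℂ) : ℝ :=
  sSup ((fun z => ‖p.eval z‖) '' K)

noncomputable def Vprod {k : ℕ} (x : Fin k → ℂ) : ℝ :=
  ∏ i, ∏ j ∈ Finset.univ.filter (fun j => i < j), ‖x i - x j‖

lemma Vprod_nonneg {k : ℕ} (x : Fin k → ℂ) : 0 ≤ Vprod x :=
  Finset.prod_nonneg fun _ _ => Finset.prod_nonneg fun _ _ => norm_nonneg _

open Finset in
lemma prod_prod_filter_eq {k : ℕ} (P : Fin k → Fin k → Prop) [∀ i j, Decidable (P i j)]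
    (g : Fin k → Fin k → ℝ) :
    ∏ i, ∏ j ∈ Finset.univ.filter (fun j => P i j), g i j
      = ∏ p ∈ (Finset.univ ×ˢ Finset.univ).filter (fun p : Fin k × Fin k => P p.1 p.2),
          g p.1 p.2 := by
  simp only [Finset.prod_filter]
  rw [Finset.prod_product' (f := fun i j => if P i j then g i j else 1)]

lemma swap_pairs_prod {k : ℕ} (g : Fin k × Fin k → ℝ) (hg : ∀ p, g p.swap = g p) :
    ∏ p ∈ (Finset.univ ×ˢ Finset.univ).filter (fun p : Fin k × Fin k => p.2 < p.1), g p
      = ∏ p ∈ (Finset.univ ×ˢ Finset.univ).filter (fun p : Fin k × Fin k => p.1 < p.2), g p := by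
  apply Finset.prod_nbij' (fun p => p.swap) (fun p => p.swap)
  · intro p hp; simp only [Finset.mem_filter, Finset.mem_product] at *; exact ⟨⟨hp.1.2, hp.1.1⟩, hp.2⟩
  · intro p hp; simp only [Finset.mem_filter, Finset.mem_product] at *; exact ⟨⟨hp.1.2, hp.1.1⟩, hp.2⟩
  · intro p _; simp
  · intro p _; simp
  · intro p _; exact (hg p).symm

lemma prod_offDiag_eq_sq {k : ℕ} (x : Fin k → ℂ) :
    ∏ i, ∏ j ∈ Finset.univ.filter (fun j => j ≠ i), ‖x i - x j‖
      = Vprod x ^ 2 := by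
  rw [prod_prod_filter_eq (fun i j => j ≠ i), Vprod,
    prod_prod_filter_eq (fun i j => i < j)]
  have hsplit := Finset.prod_filter_mul_prod_filter_not
    ((Finset.univ ×ˢ Finset.univ).filter (fun p : Fin k × Fin k => p.2 ≠ p.1))
    (fun p : Fin k × Fin k => p.1 < p.2)
    (fun p : Fin k × Fin k => ‖x p.1 - x p.2‖)
  rw [Finset.filter_filter, Finset.filter_filter] at hsplit
  have e1 : ((Finset.univ ×ˢ Finset.univ).filter fun p : Fin k × Fin k => p.2 ≠ p.1 ∧ p.1 < p.2)
      = (Finset.univ ×ˢ Finset.univ).filter fun p : Fin k × Fin k => p.1 < p.2 := by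
    apply Finset.filter_congr; intro p _
    constructor
    · exact fun h => h.2
    · exact fun h => ⟨(ne_of_lt h).symm, h⟩
  have e2 : ((Finset.univ ×ˢ Finset.univ).filter fun p : Fin k × Fin k => p.2 ≠ p.1 ∧ ¬ p.1 < p.2)
      = (Finset.univ ×ˢ Finset.univ).filter fun p : Fin k × Fin k => p.2 < p.1 := by
    apply Finset.filter_congr; intro p _
    constructor
    · exact fun h => lt_of_le_of_ne (not_lt.mp h.2) h.1
    · exact fun h => ⟨(ne_of_lt h).symm.symm, not_lt.mpr (le_of_lt h)⟩
  rw [e1, e2] at hsplit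
  rw [← hsplit, swap_pairs_prod (fun p => ‖x p.1 - x p.2‖)
    (fun p => by simpa using norm_sub_rev (x p.2) (x p.1)), sq]

noncomputable def Voff {k : ℕ} (x : Fin k → ℂ) (i : Fin k) : ℝ :=
  ∏ p ∈ (Finset.univ ×ˢ Finset.univ).filter
      (fun p : Fin k × Fin k => p.1 < p.2 ∧ ¬(p.1 = i ∨ p.2 = i)),
    ‖x p.1 - x p.2‖

lemma prod_touching {k : ℕ} (x : Fin k → ℂ) (i : Fin k) :
    ∏ p ∈ (Finset.univ ×ˢ Finset.univ).filter
        (fun p : Fin k × Fin k => p.1 < p.2 ∧ (p.1 = i ∨ p.2 = i)),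
      ‖x p.1 - x p.2‖
    = ∏ j ∈ Finset.univ.filter (fun j => j ≠ i), ‖x i - x j‖ := by
  apply Finset.prod_nbij' (fun p => if p.1 = i then p.2 else p.1)
      (fun j => if i < j then (i, j) else (j, i))
  · intro p hp
    simp only [Finset.mem_filter, Finset.mem_product, Finset.mem_univ, true_and] at hp
    rw [Finset.mem_filter]
    refine ⟨Finset.mem_univ _, ?_⟩
    rcases hp.2 with h1 | h2
    · rw [if_pos h1]; exact ne_of_gt (h1 ▸ hp.1)
    · by_cases h1 : p.1 = i
      · rw [h1, h2] at hp; exact absurd hp.1 (lt_irrefl i)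
      · rw [if_neg h1]; exact h1
  · intro j hj
    simp only [Finset.mem_filter, Finset.mem_univ, true_and] at hj
    rw [Finset.mem_filter]
    refine ⟨Finset.mem_product.mpr ⟨Finset.mem_univ _, Finset.mem_univ _⟩, ?_⟩
    rcases lt_or_gt_of_ne (Ne.symm hj) with h | h
    · rw [if_pos h]; exact ⟨h, Or.inl rfl⟩
    · rw [if_neg (not_lt.mpr (le_of_lt h))]; exact ⟨h, Or.inr rfl⟩
  · intro p hp
    simp only [Finset.mem_filter, Finset.mem_product, Finset.mem_univ, true_and] at hp
    rcases hp.2 with h1 | h2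
    · rw [if_pos h1, if_pos (h1 ▸ hp.1)]
      exact Prod.ext h1.symm rfl
    · by_cases h1 : p.1 = i
      · rw [h1, h2] at hp; exact absurd hp.1 (lt_irrefl i)
      · rw [if_neg h1, if_neg (not_lt.mpr (le_of_lt (h2 ▸ hp.1)))]
        exact Prod.ext rfl h2.symm
  · intro j hj
    simp only [Finset.mem_filter, Finset.mem_univ, true_and] at hj
    rcases lt_or_gt_of_ne (Ne.symm hj) with h | h
    · rw [if_pos h]; simp
    · rw [if_neg (not_lt.mpr (le_of_lt h))]; simp [hj]
  · intro p hp
    simp only [Finset.mem_filter, Finset.mem_product, Finset.mem_univ, true_and] at hp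
    rcases hp.2 with h1 | h2
    · rw [if_pos h1, h1]
    · by_cases h1 : p.1 = i
      · rw [h1, h2] at hp; exact absurd hp.1 (lt_irrefl i)
      · rw [if_neg h1, h2]
        exact (norm_sub_rev _ _)

lemma Vprod_factor {k : ℕ} (x : Fin k → ℂ) (i : Fin k) :
    Vprod x = (∏ j ∈ Finset.univ.filter (fun j => j ≠ i), ‖x i - x j‖) * Voff x i := by
  rw [Vprod, prod_prod_filter_eq (fun i j => i < j), ← prod_touching x i, Voff]
  rw [← Finset.prod_filter_mul_prod_filter_not
    ((Finset.univ ×ˢ Finset.univ).filter (fun p : Fin k × Fin k => p.1 < p.2))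
    (fun p : Fin k × Fin k => p.1 = i ∨ p.2 = i), Finset.filter_filter, Finset.filter_filter]

lemma Voff_update {k : ℕ} (x : Fin k → ℂ) (i : Fin k) (z : ℂ) :
    Voff (Function.update x i z) i = Voff x i := by
  apply Finset.prod_congr rfl
  intro p hp
  simp only [Finset.mem_filter, Finset.mem_product] at hp
  push_neg at hp
  rw [Function.update_of_ne hp.2.2.1, Function.update_of_ne hp.2.2.2]


lemma Voff_nonneg {k : ℕ} (x : Fin k → ℂ) (i : Fin k) : 0 ≤ Voff x i :=
  Finset.prod_nonneg fun _ _ => norm_nonneg _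

section basic

variable {K : Set ℂ} (hK : IsCompact K) (hne : K.Nonempty)

include hK hne
set_option linter.unusedSectionVars false

lemma bddAbove_absEval (p : Polynomial ℂ) :
    BddAbove ((fun z => ‖p.eval z‖) '' K) :=
  (hK.image (continuous_norm.comp p.continuous_aeval)).bddAbove

lemma le_normK (p : Polynomial ℂ) {z : ℂ} (hz : z ∈ K) :
    ‖p.eval z‖ ≤ normK K p :=
  le_csSup (bddAbove_absEval hK hne p) ⟨z, hz, rfl⟩

lemma normK_nonneg (p : Polynomial ℂ) : 0 ≤ normK K p := by
  obtain ⟨z, hz⟩ := id hne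
  exact le_trans (norm_nonneg _) (le_normK hK hne p hz)

lemma normK_pos (hinf : K.Infinite) {p : Polynomial ℂ} (hp : p ≠ 0) :
    0 < normK K p := by
  obtain ⟨z, hzK, hz⟩ : ∃ z ∈ K, ¬ p.IsRoot z := by
    by_contra h
    push_neg at h
    exact hinf ((Polynomial.finite_setOf_isRoot hp).subset h)
  exact lt_of_lt_of_le (norm_pos_iff.mpr hz) (le_normK hK hne p hzK)

lemma chebY_le {k : ℕ} {p : Polynomial ℂ} (hm : p.Monic) (hd : p.natDegree = k) :
    chebY K k ≤ normK K p := by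
  apply csInf_le
  · refine ⟨0, fun y hy => ?_⟩
    obtain ⟨q, _, _, rfl⟩ := hy
    exact normK_nonneg hK hne q
  · exact ⟨p, hm, hd, rfl⟩

lemma le_chebY {k : ℕ} {c : ℝ}
    (h : ∀ p : Polynomial ℂ, p.Monic → p.natDegree = k → c ≤ normK K p) :
    c ≤ chebY K k := by
  refine le_csInf ⟨normK K (X ^ k), X ^ k, monic_X_pow k, natDegree_X_pow k, rfl⟩ ?_
  rintro y ⟨p, hm, hd, rfl⟩
  exact h p hm hd

lemma chebY_nonneg (k : ℕ) : 0 ≤ chebY K k :=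
  le_chebY hK hne fun p _ _ => normK_nonneg hK hne p

lemma diamT_eq_sSup_image (k : ℕ) :
    diamT K k = sSup (Vprod '' {x : Fin k → ℂ | ∀ i, x i ∈ K}) := by
  unfold diamT
  congr 1
  ext y
  constructor
  · rintro ⟨x, hx, rfl⟩; exact ⟨x, hx, rfl⟩
  · rintro ⟨x, hx, rfl⟩; exact ⟨x, hx, rfl⟩

lemma exists_fekete (k : ℕ) :
    ∃ ξ : Fin k → ℂ, (∀ i, ξ i ∈ K) ∧ Vprod ξ = diamT K k ∧
      ∀ x : Fin k → ℂ, (∀ i, x i ∈ K) → Vprod x ≤ diamT K k := by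
  have hScomp : IsCompact {x : Fin k → ℂ | ∀ i, x i ∈ K} := by
    have : {x : Fin k → ℂ | ∀ i, x i ∈ K} = Set.pi Set.univ (fun _ => K) := by
      ext x; simp [Set.mem_pi]
    rw [this]
    exact isCompact_univ_pi fun _ => hK
  have hSne : ({x : Fin k → ℂ | ∀ i, x i ∈ K}).Nonempty := by
    obtain ⟨z, hz⟩ := id hne
    exact ⟨fun _ => z, fun _ => hz⟩
  have hcont : Continuous (Vprod (k := k)) := by
    apply continuous_finset_prod
    intro i _
    apply continuous_finset_prod
    intro j _
    exact continuous_norm.comp ((continuous_apply i).sub (continuous_apply j))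
  obtain ⟨ξ, hξS, hmax⟩ := hScomp.exists_isMaxOn hSne hcont.continuousOn
  have hsup : sSup (Vprod '' {x : Fin k → ℂ | ∀ i, x i ∈ K}) = Vprod ξ := by
    apply IsGreatest.csSup_eq
    exact ⟨⟨ξ, hξS, rfl⟩, by rintro y ⟨x, hx, rfl⟩; exact hmax hx⟩
  refine ⟨ξ, hξS, by rw [diamT_eq_sSup_image hK hne, hsup], fun x hx => ?_⟩
  rw [diamT_eq_sSup_image hK hne, hsup]
  exact hmax hx

lemma Vprod_le_diamT {k : ℕ} {x : Fin k → ℂ} (hx : ∀ i, x i ∈ K) :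
    Vprod x ≤ diamT K k := by
  obtain ⟨ξ, _, _, hle⟩ := exists_fekete hK hne k
  exact hle x hx

lemma diamT_nonneg (k : ℕ) : 0 ≤ diamT K k := by
  obtain ⟨z, hz⟩ := id hne
  exact le_trans (Vprod_nonneg _) (Vprod_le_diamT hK hne (x := fun _ => z) fun _ => hz)

lemma diamT_pos (hinf : K.Infinite) (k : ℕ) : 0 < diamT K k := by
  obtain ⟨t, htK, htc⟩ := hinf.exists_subset_card_eq k
  obtain ⟨e⟩ : Nonempty (Fin k ≃ t) :=
    ⟨(Finset.equivFinOfCardEq htc).symm⟩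
  set x : Fin k → ℂ := fun i => (e i : ℂ) with hx
  have hxK : ∀ i, x i ∈ K := fun i => htK (e i).2
  have hxinj : Function.Injective x := fun i j hij => by
    have := Subtype.coe_injective hij
    exact e.injective this
  refine lt_of_lt_of_le ?_ (Vprod_le_diamT hK hne hxK)
  apply Finset.prod_pos
  intro i _
  apply Finset.prod_pos
  intro j hj
  simp only [Finset.mem_filter] at hj
  have : x i ≠ x j := fun h => absurd (hxinj h) (ne_of_lt hj.2)
  simpa [norm_pos_iff, sub_eq_zero] using this


lemma chebY_pow_le_diamT_sq (hinf : K.Infinite) (m : ℕ) :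
    chebY K m ^ (m + 1) ≤ diamT K (m + 1) ^ 2 := by
  obtain ⟨ξ, hξK, hξV, hmax⟩ := exists_fekete hK hne (m + 1)
  have hM : 0 < diamT K (m + 1) := diamT_pos hK hne hinf (m + 1)
  have key : ∀ i : Fin (m + 1),
      chebY K m ≤ ∏ j ∈ Finset.univ.filter (fun j => j ≠ i), ‖ξ i - ξ j‖ := by
    intro i
    set A := ∏ j ∈ Finset.univ.filter (fun j => j ≠ i), ‖ξ i - ξ j‖ with hA
    have hfac : ∀ z : ℂ, Vprod (Function.update ξ i z)
        = (∏ j ∈ Finset.univ.filter (fun j => j ≠ i), ‖z - ξ j‖) * Voff ξ i := by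
      intro z
      rw [Vprod_factor (Function.update ξ i z) i, Voff_update]
      congr 1
      apply Finset.prod_congr rfl
      intro j hj
      simp only [Finset.mem_filter] at hj
      rw [Function.update_self, Function.update_of_ne hj.2]
    have hAeq : A * Voff ξ i = diamT K (m + 1) := by
      have h0 := hfac (ξ i)
      rw [Function.update_eq_self] at h0
      rw [← hξV, h0]
    have hVoffpos : 0 < Voff ξ i := by
      rcases lt_or_eq_of_le (Voff_nonneg ξ i) with h | h
      · exact h
      · exfalso; rw [← h, mul_zero] at hAeq; exact hM.ne hAeq
    set q : Polynomial ℂ := ∏ j ∈ Finset.univ.filter (fun j => j ≠ i), (X - C (ξ j)) with hq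
    have hqm : q.Monic := monic_prod_of_monic _ _ fun j _ => monic_X_sub_C _
    have hqd : q.natDegree = m := by
      rw [hq, natDegree_prod_of_monic _ _ fun j _ => monic_X_sub_C _]
      simp only [natDegree_X_sub_C, Finset.sum_const, smul_eq_mul, mul_one]
      rw [Finset.filter_ne', Finset.card_erase_of_mem (Finset.mem_univ _)]
      simp
    have hqe : ∀ z : ℂ, ‖q.eval z‖
        = ∏ j ∈ Finset.univ.filter (fun j => j ≠ i), ‖z - ξ j‖ := by
      intro z
      rw [hq, eval_prod, norm_prod]
      apply Finset.prod_congr rfl; intro j _; simp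
    have hnorm : normK K q ≤ A := by
      apply csSup_le (hne.image _)
      rintro y ⟨z, hz, rfl⟩
      simp only
      rw [hqe]
      have hupd : ∀ j, Function.update ξ i z j ∈ K := by
        intro j
        by_cases hji : j = i
        · rw [hji, Function.update_self]; exact hz
        · rw [Function.update_of_ne hji]; exact hξK j
      have h1 : (∏ j ∈ Finset.univ.filter (fun j => j ≠ i), ‖z - ξ j‖) * Voff ξ i
          ≤ A * Voff ξ i := by
        rw [hAeq, ← hfac z]
        exact hmax _ hupd
      exact le_of_mul_le_mul_right h1 hVoffpos
    exact le_trans (chebY_le hK hne hqm hqd) hnorm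
  calc chebY K m ^ (m + 1) = ∏ _i : Fin (m + 1), chebY K m := by
        rw [Finset.prod_const, Finset.card_univ, Fintype.card_fin]
    _ ≤ ∏ i : Fin (m + 1), ∏ j ∈ Finset.univ.filter (fun j => j ≠ i),
          ‖ξ i - ξ j‖ :=
        Finset.prod_le_prod (fun i _ => chebY_nonneg hK hne m) (fun i _ => key i)
    _ = Vprod ξ ^ 2 := prod_offDiag_eq_sq ξ
    _ = diamT K (m + 1) ^ 2 := by rw [hξV]


lemma diamT_le_det_bound (hinf : K.Infinite) {m : ℕ} (hm : 0 < m) {q : Polynomial ℂ}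
    (hqm : q.Monic) (hqd : q.natDegree = m) {D : ℝ} (hD1 : 1 ≤ D)
    (hDK : ∀ z ∈ K, ‖z‖ ≤ D) (n : ℕ) :
    diamT K n ≤ (n.factorial : ℝ) * (D ^ m * max (normK K q)⁻¹ 1) ^ n
      * (normK K q ^ ((m : ℝ)⁻¹)) ^ n.choose 2 := by
  set Q := normK K q with hQdef
  have hQ : 0 < Q := normK_pos hK hne hinf hqm.ne_zero
  set E := max Q⁻¹ 1 with hEdef
  have hE1 : (1 : ℝ) ≤ E := le_max_right _ _
  set t := Q ^ ((m : ℝ)⁻¹) with htdef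
  have ht : 0 < t := Real.rpow_pos_of_pos hQ _
  -- the polynomial basis
  set p : Fin n → Polynomial ℂ := fun j => X ^ ((j : ℕ) % m) * q ^ ((j : ℕ) / m) with hpdef
  have hpm : ∀ j, (p j).Monic := fun j => (monic_X_pow _).mul (hqm.pow _)
  have hpd : ∀ j : Fin n, (p j).natDegree = (j : ℕ) := by
    intro j
    rw [hpdef]
    simp only
    rw [(monic_X_pow _).natDegree_mul (hqm.pow _), natDegree_X_pow, natDegree_pow, hqd]
    exact Nat.mod_add_div' (j : ℕ) m
  -- entry bound
  have hentry : ∀ (z : ℂ), z ∈ K → ∀ j : Fin n,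
      ‖(p j).eval z‖ ≤ D ^ m * E * t ^ (j : ℕ) := by
    intro z hz j
    have habs : ‖(p j).eval z‖
        = ‖z‖ ^ ((j : ℕ) % m) * ‖q.eval z‖ ^ ((j : ℕ) / m) := by
      rw [hpdef]; simp [norm_mul, norm_pow]
    have h1 : ‖z‖ ^ ((j : ℕ) % m) ≤ D ^ m :=
      le_trans (pow_le_pow_left₀ (norm_nonneg z) (hDK z hz) _)
        (pow_le_pow_right₀ hD1 (le_of_lt (Nat.mod_lt _ hm)))
    have h2 : ‖q.eval z‖ ^ ((j : ℕ) / m) ≤ Q ^ ((j : ℕ) / m) :=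
      pow_le_pow_left₀ (norm_nonneg _) (le_normK hK hne q hz) _
    have htj : t ^ (j : ℕ) = Q ^ (((j : ℕ) : ℝ) / m) := by
      rw [htdef, ← Real.rpow_natCast (Q ^ ((m : ℝ)⁻¹)) (j : ℕ), ← Real.rpow_mul hQ.le]
      congr 1
      rw [div_eq_mul_inv, mul_comm]
    have h3 : Q ^ ((j : ℕ) / m) ≤ E * t ^ (j : ℕ) := by
      have hcast : (Q : ℝ) ^ ((j : ℕ) / m) = Q ^ ((((j : ℕ) / m : ℕ) : ℝ)) := by
        rw [Real.rpow_natCast]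
      rcases le_or_gt 1 Q with hQ1 | hQ1
      · have hle : ((((j : ℕ) / m : ℕ)) : ℝ) ≤ ((j : ℕ) : ℝ) / m := by
          rw [le_div_iff₀ (by exact_mod_cast hm : (0:ℝ) < m)]
          exact_mod_cast Nat.div_mul_le_self (j : ℕ) m
        rw [hcast, htj]
        exact le_mul_of_one_le_left (Real.rpow_nonneg hQ.le _) hE1
          |>.trans' (Real.rpow_le_rpow_of_exponent_le hQ1 hle)
      · have hge : ((j : ℕ) : ℝ) / m - 1 ≤ ((((j : ℕ) / m : ℕ)) : ℝ) := by
          rw [sub_le_iff_le_add, div_le_iff₀ (by exact_mod_cast hm : (0:ℝ) < m)]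
          have : (j : ℕ) < m * ((j : ℕ) / m) + m := by
            conv_lhs => rw [← Nat.div_add_mod (j : ℕ) m]
            exact Nat.add_lt_add_left (Nat.mod_lt _ hm) _
          have h4 : ((j : ℕ) : ℝ) < m * ((((j : ℕ) / m : ℕ)) : ℝ) + m := by
            exact_mod_cast this
          nlinarith [h4]
        have hstep : Q ^ ((((j : ℕ) / m : ℕ)) : ℝ) ≤ Q ^ (((j : ℕ) : ℝ) / m - 1) :=
          Real.rpow_le_rpow_of_exponent_ge hQ hQ1.le hge
        have heq : Q ^ (((j : ℕ) : ℝ) / m - 1) = Q⁻¹ * Q ^ (((j : ℕ) : ℝ) / m) := by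
          rw [Real.rpow_sub hQ, Real.rpow_one, div_eq_mul_inv, mul_comm]
        rw [hcast, htj]
        refine le_trans hstep ?_
        rw [heq]
        exact mul_le_mul_of_nonneg_right (le_max_left _ _) (Real.rpow_nonneg hQ.le _)
    calc ‖(p j).eval z‖
        = ‖z‖ ^ ((j : ℕ) % m) * ‖q.eval z‖ ^ ((j : ℕ) / m) := habs
      _ ≤ D ^ m * (E * t ^ (j : ℕ)) := by
          exact mul_le_mul h1 (le_trans h2 h3) (pow_nonneg (norm_nonneg _) _)
            (pow_nonneg (le_trans zero_le_one hD1) m)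
      _ = D ^ m * E * t ^ (j : ℕ) := by ring
  have hVle : ∀ x : Fin n → ℂ, (∀ i, x i ∈ K) →
      Vprod x ≤ (n.factorial : ℝ) * ∏ j : Fin n, (D ^ m * E * t ^ (j : ℕ)) := by
    intro x hx
    have hVdet : Vprod x = ‖(Matrix.vandermonde x).det‖ := by
      rw [Matrix.det_vandermonde, norm_prod]
      apply Finset.prod_congr rfl
      intro i _
      rw [norm_prod]
      rw [show Finset.Ioi i = Finset.univ.filter (fun j => i < j) by ext j; simp]
      apply Finset.prod_congr rfl
      intro j _
      exact norm_sub_rev _ _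
    rw [hVdet, Matrix.det_eval_matrixOfPolynomials_eq_det_vandermonde x p hpd hpm,
      Matrix.det_apply]
    have hterm : ∀ σ : Equiv.Perm (Fin n),
        ‖Equiv.Perm.sign σ •
          ∏ i, (Matrix.of fun i j => (p j).eval (x i)) (σ i) i‖
        ≤ ∏ j : Fin n, (D ^ m * E * t ^ (j : ℕ)) := by
      intro σ
      have hsign : ∀ y : ℂ, ‖Equiv.Perm.sign σ • y‖ = ‖y‖ := by
        intro y
        rcases Int.units_eq_one_or (Equiv.Perm.sign σ) with h | h <;>
          simp [h, Units.smul_def]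
      rw [hsign, norm_prod]
      apply Finset.prod_le_prod (fun j _ => norm_nonneg _)
      intro j _
      simp only [Matrix.of_apply]
      exact hentry (x (σ j)) (hx (σ j)) j
    refine le_trans (norm_sum_le _ _) ?_
    refine le_trans (Finset.sum_le_sum fun σ _ => hterm σ) ?_
    rw [Finset.sum_const, Finset.card_univ, Fintype.card_perm, Fintype.card_fin,
      nsmul_eq_mul]
  have hprod : ∏ j : Fin n, (D ^ m * E * t ^ (j : ℕ)) = (D ^ m * E) ^ n * t ^ n.choose 2 := by
    rw [Finset.prod_mul_distrib, Finset.prod_const, Finset.card_univ, Fintype.card_fin,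
      Finset.prod_pow_eq_pow_sum]
    congr 1
    congr 1
    rw [Fin.sum_univ_eq_sum_range (fun i => i)]
    have h1 := Finset.sum_range_id_mul_two n
    have h2 := Nat.choose_two_right n
    omega
  obtain ⟨ξ, hξK, hξV, -⟩ := exists_fekete hK hne n
  rw [← hξV]
  calc Vprod ξ ≤ (n.factorial : ℝ) * ∏ j : Fin n, (D ^ m * E * t ^ (j : ℕ)) := hVle ξ hξK
    _ = (n.factorial : ℝ) * (D ^ m * E) ^ n * t ^ n.choose 2 := by rw [hprod]; ring

end basic


lemma two_mul_choose_two (n : ℕ) : 2 * n.choose 2 = n * (n - 1) := by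
  have hdvd : 2 ∣ n * (n - 1) := by
    rcases Nat.even_or_odd n with h | h
    · exact Dvd.dvd.mul_right h.two_dvd _
    · exact Dvd.dvd.mul_left (Nat.Odd.sub_odd h odd_one).two_dvd _
  rw [Nat.choose_two_right, Nat.mul_div_cancel' hdvd]

lemma tendsto_correction {F : ℝ} (hF : 1 ≤ F) :
    Tendsto (fun n : ℕ => ((n.factorial : ℝ) * F ^ n) ^ (((n.choose 2 : ℕ) : ℝ))⁻¹)
      atTop (nhds 1) := by
  have hF0 : (0 : ℝ) < F := lt_of_lt_of_le one_pos hF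
  have hpos : ∀ n : ℕ, (0 : ℝ) < (n.factorial : ℝ) * F ^ n := fun n =>
    mul_pos (by exact_mod_cast n.factorial_pos) (pow_pos hF0 n)
  set g : ℕ → ℝ := fun n =>
    Real.log ((n.factorial : ℝ) * F ^ n) * (((n.choose 2 : ℕ) : ℝ))⁻¹ with hgdef
  have hrepr : ∀ n : ℕ, ((n.factorial : ℝ) * F ^ n) ^ (((n.choose 2 : ℕ) : ℝ))⁻¹
      = Real.exp (g n) := fun n => Real.rpow_def_of_pos (hpos n) _
  have hx1 : ∀ n : ℕ, (1 : ℝ) ≤ (n.factorial : ℝ) * F ^ n := by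
    intro n
    have h1 : (1 : ℝ) ≤ (n.factorial : ℝ) := by exact_mod_cast n.factorial_pos
    have h2 : (1 : ℝ) ≤ F ^ n := one_le_pow₀ hF
    nlinarith
  have hg0 : ∀ n : ℕ, 0 ≤ g n := fun n =>
    mul_nonneg (Real.log_nonneg (hx1 n)) (inv_nonneg.mpr (by positivity))
  have hgle : ∀ n : ℕ, 2 ≤ n → g n ≤ 4 * (Real.log n / n) + (4 * Real.log F) * (1 / n) := by
    intro n hn
    have hn0 : (0 : ℝ) < n := by exact_mod_cast lt_of_lt_of_le two_pos hn
    have hchoose : 2 * ((n.choose 2 : ℕ) : ℝ) = (n : ℝ) * ((n : ℝ) - 1) := by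
      have hdvd : 2 ∣ n * (n - 1) := by
        rcases Nat.even_or_odd n with h | h
        · exact Dvd.dvd.mul_right h.two_dvd _
        · exact Dvd.dvd.mul_left (Nat.Odd.sub_odd h odd_one).two_dvd _
      have h2 : 2 * n.choose 2 = n * (n - 1) := by
        rw [Nat.choose_two_right, Nat.mul_div_cancel' hdvd]
      have : ((2 * n.choose 2 : ℕ) : ℝ) = ((n * (n - 1) : ℕ) : ℝ) := by exact_mod_cast h2
      push_cast at this
      rw [Nat.cast_sub (by omega : 1 ≤ n)] at this
      push_cast at this
      linarith [this]
    have hcpos : (0 : ℝ) < ((n.choose 2 : ℕ) : ℝ) := by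
      have : (n : ℝ) * ((n : ℝ) - 1) > 0 := by
        apply mul_pos hn0
        have : (2 : ℝ) ≤ (n : ℝ) := by exact_mod_cast hn
        linarith
      linarith [hchoose]
    have hclow : (n : ℝ) * (n : ℝ) / 4 ≤ ((n.choose 2 : ℕ) : ℝ) := by
      have h2n : (2 : ℝ) ≤ (n : ℝ) := by exact_mod_cast hn
      nlinarith [hchoose]
    have hinvle : (((n.choose 2 : ℕ) : ℝ))⁻¹ ≤ 4 / ((n : ℝ) * (n : ℝ)) := by
      have hnn : (0 : ℝ) < (n : ℝ) * (n : ℝ) := by positivity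
      rw [← one_div, div_le_div_iff₀ hcpos hnn]
      nlinarith [hclow]
    have hlogle : Real.log ((n.factorial : ℝ) * F ^ n)
        ≤ (n : ℝ) * Real.log n + (n : ℝ) * Real.log F := by
      rw [Real.log_mul (by positivity) (by positivity), Real.log_pow]
      have h1 : Real.log (n.factorial : ℝ) ≤ Real.log ((n : ℝ) ^ n) := by
        apply Real.log_le_log (by exact_mod_cast n.factorial_pos)
        exact_mod_cast n.factorial_le_pow
      rw [Real.log_pow] at h1
      push_cast
      linarith [h1]
    have hlogn0 : 0 ≤ (n : ℝ) * Real.log n + (n : ℝ) * Real.log F := by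
      have : (1 : ℝ) ≤ (n : ℝ) := by exact_mod_cast le_trans one_le_two hn
      have h1 : 0 ≤ Real.log n := Real.log_nonneg this
      have h2 : 0 ≤ Real.log F := Real.log_nonneg hF
      positivity
    calc g n ≤ ((n : ℝ) * Real.log n + (n : ℝ) * Real.log F) * (4 / ((n : ℝ) * (n : ℝ))) := by
          apply mul_le_mul hlogle hinvle (inv_nonneg.mpr (by positivity)) hlogn0
      _ = 4 * (Real.log n / n) + (4 * Real.log F) * (1 / n) := by
          field_simp
  have hw : Tendsto (fun n : ℕ => 4 * (Real.log n / n) + (4 * Real.log F) * (1 / n))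
      atTop (nhds 0) := by
    have h1 : Tendsto (fun n : ℕ => Real.log n / n) atTop (nhds 0) :=
      (Real.isLittleO_log_id_atTop.tendsto_div_nhds_zero).comp tendsto_natCast_atTop_atTop
    have h2 : Tendsto (fun n : ℕ => 1 / (n : ℝ)) atTop (nhds 0) :=
      tendsto_one_div_atTop_nhds_zero_nat
    have := (h1.const_mul (4 : ℝ)).add (h2.const_mul (4 * Real.log F))
    simpa using this
  have hg : Tendsto g atTop (nhds 0) := by
    apply tendsto_of_tendsto_of_tendsto_of_le_of_le' tendsto_const_nhds hw
    · exact Eventually.of_forall hg0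
    · filter_upwards [eventually_ge_atTop 2] with n hn using hgle n hn
  have : Tendsto (fun n => Real.exp (g n)) atTop (nhds (Real.exp 0)) :=
    (Real.continuous_exp.tendsto 0).comp hg
  rw [Real.exp_zero] at this
  exact this.congr fun n => (hrepr n).symm

/-- For an infinite compact set `K ⊆ ℂ`, the Chebyshev constant
`C(K) = lim_k Y_k(K)^{1/k}` and the transfinite diameter
`T(K) = lim_k T_k(K)^{1/binom(k,2)}` both exist and are equal. -/
theorem chebyshev_constant_eq_transfinite_diameter (K : Set ℂ)
    (hK_compact : IsCompact K) (hK_inf : K.Infinite) :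
    ∃ c : ℝ, 0 ≤ c ∧
      Tendsto (fun k : ℕ => chebY K k ^ ((k : ℝ)⁻¹)) atTop (nhds c) ∧
      Tendsto (fun k : ℕ => diamT K k ^ (((k.choose 2 : ℕ) : ℝ)⁻¹)) atTop (nhds c) := by
  have hne : K.Nonempty := hK_inf.nonempty
  obtain ⟨D0, hD0⟩ : ∃ D0 : ℝ, ∀ z ∈ K, ‖z‖ ≤ D0 := by
    obtain ⟨D0, hD0⟩ := (hK_compact.image continuous_norm).bddAbove
    exact ⟨D0, fun z hz => hD0 (Set.mem_image_of_mem _ hz)⟩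
  set D := max D0 1 with hDdef
  have hD1 : (1 : ℝ) ≤ D := le_max_right _ _
  have hDK : ∀ z ∈ K, ‖z‖ ≤ D := fun z hz => le_trans (hD0 z hz) (le_max_left _ _)
  set B : ℕ → ℝ := fun n => diamT K n ^ (((n.choose 2 : ℕ) : ℝ)⁻¹) with hBdef
  set a : ℕ → ℝ := fun n => chebY K n ^ ((n : ℝ)⁻¹) with hadef
  have hB0 : ∀ n, 0 ≤ B n := fun n => Real.rpow_nonneg (diamT_nonneg hK_compact hne n) _
  -- the determinant estimate, packaged
  have hmain : ∀ m : ℕ, 0 < m → ∀ q : Polynomial ℂ, q.Monic → q.natDegree = m →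
      ∃ u : ℕ → ℝ, Tendsto u atTop (nhds 1) ∧
        ∀ n, 2 ≤ n → B n ≤ u n * (normK K q ^ ((m : ℝ)⁻¹)) := by
    intro m hm q hqm hqd
    set Q := normK K q with hQdef
    have hQ : 0 < Q := normK_pos hK_compact hne hK_inf hqm.ne_zero
    set E := max Q⁻¹ 1 with hEdef
    have hE1 : (1 : ℝ) ≤ E := le_max_right _ _
    set t := Q ^ ((m : ℝ)⁻¹) with htdef
    have ht0 : (0 : ℝ) ≤ t := Real.rpow_nonneg hQ.le _
    set F := D ^ m * E with hFdef
    have hF1 : (1 : ℝ) ≤ F := by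
      have h1 : (1 : ℝ) ≤ D ^ m := one_le_pow₀ hD1
      nlinarith
    refine ⟨fun n => ((n.factorial : ℝ) * F ^ n) ^ (((n.choose 2 : ℕ) : ℝ)⁻¹),
      tendsto_correction hF1, ?_⟩
    intro n hn
    have hc : 0 < n.choose 2 := Nat.choose_pos hn
    have hcr : (0 : ℝ) < ((n.choose 2 : ℕ) : ℝ) := by exact_mod_cast hc
    have hbound := diamT_le_det_bound hK_compact hne hK_inf hm hqm hqd hD1 hDK n
    have h1 : B n ≤ ((n.factorial : ℝ) * F ^ n * t ^ n.choose 2) ^ (((n.choose 2 : ℕ) : ℝ)⁻¹) :=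
      Real.rpow_le_rpow (diamT_nonneg hK_compact hne n)
        (by rw [hFdef]; exact hbound) (inv_nonneg.mpr hcr.le)
    refine le_trans h1 ?_
    rw [Real.mul_rpow (by positivity) (by positivity)]
    have h2 : (t ^ n.choose 2) ^ (((n.choose 2 : ℕ) : ℝ)⁻¹) = t := by
      rw [← Real.rpow_natCast t (n.choose 2), ← Real.rpow_mul ht0,
        mul_inv_cancel₀ (ne_of_gt hcr), Real.rpow_one]
    rw [h2]
  -- boundedness of B
  have hbelow : IsBoundedUnder (· ≥ ·) atTop B := isBoundedUnder_of ⟨0, fun n => hB0 n⟩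
  have hBbdd : IsBoundedUnder (· ≤ ·) atTop B := by
    obtain ⟨u, hu, hBu⟩ := hmain 1 one_pos X monic_X natDegree_X
    have hvt := hu.mul_const (normK K X ^ ((((1 : ℕ)) : ℝ)⁻¹))
    refine hvt.isBoundedUnder_le.mono_le ?_
    filter_upwards [eventually_ge_atTop 2] with n hn using hBu n hn
  -- the key limsup estimate
  have hkey : ∀ m : ℕ, 0 < m → ∀ q : Polynomial ℂ, q.Monic → q.natDegree = m →
      limsup B atTop ≤ normK K q ^ ((m : ℝ)⁻¹) := by
    intro m hm q hqm hqd
    obtain ⟨u, hu, hBu⟩ := hmain m hm q hqm hqd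
    have hvt : Tendsto (fun n => u n * (normK K q ^ ((m : ℝ)⁻¹))) atTop
        (nhds (normK K q ^ ((m : ℝ)⁻¹))) := by
      have := hu.mul_const (normK K q ^ ((m : ℝ)⁻¹))
      rwa [one_mul] at this
    have hle : limsup B atTop ≤ limsup (fun n => u n * (normK K q ^ ((m : ℝ)⁻¹))) atTop :=
      limsup_le_limsup
        (by filter_upwards [eventually_ge_atTop 2] with n hn using hBu n hn)
        hbelow.isCoboundedUnder_le hvt.isBoundedUnder_le
    rwa [hvt.limsup_eq] at hle
  set L := limsup B atTop with hLdef
  have hL0 : 0 ≤ L :=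
    le_limsup_of_le hBbdd fun b hb => let ⟨n, hn⟩ := hb.exists; le_trans (hB0 n) hn
  have hLa : ∀ m : ℕ, 1 ≤ m → L ≤ a m := by
    intro m hm
    have hmr : (0 : ℝ) < (m : ℝ) := by exact_mod_cast hm
    have hYm : L ^ m ≤ chebY K m := by
      apply le_chebY hK_compact hne
      intro p hpm hpd
      have h1 : L ≤ normK K p ^ ((m : ℝ)⁻¹) := hkey m hm p hpm hpd
      have h2 : L ^ m ≤ (normK K p ^ ((m : ℝ)⁻¹)) ^ m := pow_le_pow_left₀ hL0 h1 m
      rwa [← Real.rpow_natCast (normK K p ^ ((m : ℝ)⁻¹)) m,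
        ← Real.rpow_mul (normK_nonneg hK_compact hne p),
        inv_mul_cancel₀ (ne_of_gt hmr), Real.rpow_one] at h2
    have h3 := Real.rpow_le_rpow (pow_nonneg hL0 m) hYm (inv_nonneg.mpr hmr.le)
    rwa [← Real.rpow_natCast L m, ← Real.rpow_mul hL0,
      mul_inv_cancel₀ (ne_of_gt hmr), Real.rpow_one] at h3
  have hab : ∀ m : ℕ, 1 ≤ m → a m ≤ B (m + 1) := by
    intro m hm
    have hmr : (0 : ℝ) < (m : ℝ) := by exact_mod_cast hm
    have h := chebY_pow_le_diamT_sq hK_compact hne hK_inf m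
    have hY0 : 0 ≤ chebY K m := chebY_nonneg hK_compact hne m
    have hM0 : 0 ≤ diamT K (m + 1) := diamT_nonneg hK_compact hne (m + 1)
    have he : (0 : ℝ) ≤ (((m * (m + 1) : ℕ)) : ℝ)⁻¹ := by positivity
    have h2 := Real.rpow_le_rpow (pow_nonneg hY0 _) h he
    rw [← Real.rpow_natCast (chebY K m) (m + 1), ← Real.rpow_mul hY0,
      ← Real.rpow_natCast (diamT K (m + 1)) 2, ← Real.rpow_mul hM0] at h2
    have hL1 : ((m + 1 : ℕ) : ℝ) * (((m * (m + 1) : ℕ)) : ℝ)⁻¹ = (m : ℝ)⁻¹ := by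
      push_cast
      rw [eq_comm]
      field_simp
    have hc2 : 2 * ((m + 1).choose 2) = (m + 1) * m := by
      have h4 := two_mul_choose_two (m + 1)
      simpa using h4
    have hR : ((2 : ℕ) : ℝ) * (((m * (m + 1) : ℕ)) : ℝ)⁻¹
        = (((m + 1).choose 2 : ℕ) : ℝ)⁻¹ := by
      have hcr : (((m + 1).choose 2 : ℕ) : ℝ) = ((m : ℝ) * ((m : ℝ) + 1)) / 2 := by
        have h5 : ((2 * ((m + 1).choose 2) : ℕ) : ℝ) = (((m + 1) * m : ℕ) : ℝ) := by
          exact_mod_cast hc2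
        push_cast at h5
        linarith
      rw [hcr]
      push_cast
      rw [eq_comm]
      field_simp
    rw [hL1, hR] at h2
    exact h2
  have hliminf : L ≤ liminf B atTop := by
    apply le_liminf_of_le hBbdd.isCoboundedUnder_ge
    filter_upwards [eventually_ge_atTop 2] with n hn
    have h1 := (hLa (n - 1) (by omega)).trans (hab (n - 1) (by omega))
    rwa [Nat.sub_add_cancel (by omega : 1 ≤ n)] at h1
  have hBtend : Tendsto B atTop (nhds L) :=
    tendsto_of_liminf_eq_limsup
      (le_antisymm (liminf_le_limsup hBbdd hbelow) hliminf) rfl hBbdd hbelow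
  have haTend : Tendsto a atTop (nhds L) := by
    apply tendsto_of_tendsto_of_tendsto_of_le_of_le' tendsto_const_nhds
      (hBtend.comp (tendsto_add_atTop_nat 1))
    · filter_upwards [eventually_ge_atTop 1] with m hm using hLa m hm
    · filter_upwards [eventually_ge_atTop 1] with m hm using hab m hm
  exact ⟨L, hL0, haTend, hBtend⟩
end

section
/- Let n ≥ 1, let p be a polynomial in n complex variables (an element of MvPolynomial over ℂ), let α ∈ ℕ^n be a multi-index such that the coefficient of the monomial z^α in p equals 1, and let r > 0. Then sup{ |p(z)| : z ∈ ℂ^n, |z_i| ≤ r for all i } ≥ r^{|α|}, where |α| = α_1 + … + α_n; equivalently, there exists z in the closed polydisc of polyradius (r, …, r) with |p(z)| ≥ r^{|α|}. -/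
open Finset

/-- If the coefficient of `z^α` in a multivariate polynomial `p` over `ℂ` equals `1`,
then the supremum of `|p|` over the closed polydisc of polyradius `(r,…,r)` is at least
`r^{|α|}`: there is a point `z` of the polydisc with `|p(z)| ≥ r^{|α|}`. -/
theorem sup_polydisc_ge_of_coeff_one (n : ℕ) (hn : 1 ≤ n)
    (p : MvPolynomial (Fin n) ℂ) (α : Fin n →₀ ℕ)
    (hcoeff : MvPolynomial.coeff α p = 1) (r : ℝ) (hr : 0 < r) :
    ∃ z : Fin n → ℂ, (∀ i, ‖z i‖ ≤ r) ∧
      r ^ (∑ i, α i) ≤ ‖MvPolynomial.eval z p‖ := by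
  classical
  set N : ℕ := p.totalDegree + 1 with hNdef
  have hN0 : N ≠ 0 := Nat.succ_ne_zero _
  set ω : ℂ := Complex.exp (2 * Real.pi * Complex.I / N) with hωdef
  have hprim : IsPrimitiveRoot ω N := Complex.isPrimitiveRoot_exp N hN0
  have hωN : ω ^ N = 1 := hprim.pow_eq_one
  have hω0 : ω ≠ 0 := hprim.ne_zero hN0
  have hωabs : ‖ω‖ = 1 := by
    have h1 : ‖ω‖ ^ N = 1 := by rw [← norm_pow, hωN, norm_one]
    rcases lt_trichotomy ‖ω‖ 1 with h | h | h
    · have := pow_lt_one₀ (norm_nonneg ω) h hN0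
      rw [h1] at this; linarith
    · exact h
    · have := one_lt_pow₀ h hN0
      rw [h1] at this; linarith
  -- degree bounds: exponents of monomials in support are < N
  have hlt : ∀ β ∈ p.support, ∀ i, β i < N := by
    intro β hβ i
    have h1 : β i ≤ β.sum fun _ e => e := by
      by_cases h : β i = 0
      · simp [h]
      · exact Finset.single_le_sum (f := fun j => β j) (fun _ _ => Nat.zero_le _)
          (Finsupp.mem_support_iff.mpr h)
    have h2 := MvPolynomial.le_totalDegree hβ
    omega
  have hαsupp : α ∈ p.support := MvPolynomial.mem_support_iff.mpr (by simp [hcoeff])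
  -- the sample points
  set z : (Fin n → Fin N) → Fin n → ℂ := fun k i => (r : ℂ) * ω ^ (k i : ℕ) with hz
  -- the twist ratio
  set ζ : (Fin n →₀ ℕ) → Fin n → ℂ := fun β i => ω ^ (β i) * (ω ^ (α i))⁻¹ with hζ
  -- the averaged sum
  set S : ℂ := ∑ k : Fin n → Fin N,
      (MvPolynomial.eval (z k) p) * ∏ i, ((ω ^ (α i))⁻¹) ^ (k i : ℕ) with hS
  have key : S = (r : ℂ) ^ (∑ i, α i) * (N : ℂ) ^ n := by
    have expand : S = ∑ β ∈ p.support, MvPolynomial.coeff β p *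
        ∏ i, ((r : ℂ) ^ (β i) * ∑ j : Fin N, (ζ β i) ^ (j : ℕ)) := by
      rw [hS]
      simp only [MvPolynomial.eval_eq', Finset.sum_mul]
      rw [Finset.sum_comm]
      refine Finset.sum_congr rfl fun β _ => ?_
      have hrhs : ∀ i : Fin n, (r : ℂ) ^ (β i) * ∑ j : Fin N, (ζ β i) ^ (j : ℕ)
          = ∑ j : Fin N, (r : ℂ) ^ (β i) * (ζ β i) ^ (j : ℕ) := fun i => Finset.mul_sum _ _ _
      rw [Finset.prod_congr rfl (fun i _ => hrhs i), Finset.prod_univ_sum,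
        Fintype.piFinset_univ, Finset.mul_sum]
      refine Finset.sum_congr rfl fun k _ => ?_
      rw [mul_assoc, ← Finset.prod_mul_distrib]
      congr 1
      refine Finset.prod_congr rfl fun i _ => ?_
      show ((r : ℂ) * ω ^ (k i : ℕ)) ^ (β i) * ((ω ^ (α i))⁻¹) ^ (k i : ℕ)
          = (r : ℂ) ^ (β i) * (ω ^ (β i) * (ω ^ (α i))⁻¹) ^ (k i : ℕ)
      rw [mul_pow, mul_pow, ← pow_mul, ← pow_mul, Nat.mul_comm]
      ring
    rw [expand]
    rw [Finset.sum_eq_single α]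
    · rw [hcoeff, one_mul]
      have : ∀ i : Fin n, ((r : ℂ) ^ (α i) * ∑ j : Fin N, (ζ α i) ^ (j : ℕ))
          = (r : ℂ) ^ (α i) * N := by
        intro i
        have : ζ α i = 1 := mul_inv_cancel₀ (pow_ne_zero _ hω0)
        rw [this]
        simp
      rw [Finset.prod_congr rfl (fun i _ => this i)]
      rw [Finset.prod_mul_distrib, Finset.prod_pow_eq_pow_sum]
      simp
    · intro β hβ hne
      have : ∃ i, β i ≠ α i := by
        by_contra h
        push_neg at h
        exact hne (Finsupp.ext h)
      obtain ⟨i, hi⟩ := this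
      have hζne : ζ β i ≠ 1 := by
        rw [hζ]
        intro h
        have hωa0 : ω ^ (α i) ≠ 0 := pow_ne_zero _ hω0
        have heq : ω ^ (β i) = ω ^ (α i) := by
          field_simp at h
          exact h
        exact hi (hprim.pow_inj (hlt β hβ i) (hlt α hαsupp i) heq)
      have hζN : ζ β i ^ N = 1 := by
        rw [hζ]
        simp only [mul_pow, inv_pow, ← pow_mul]
        rw [mul_comm (β i) N, mul_comm (α i) N, pow_mul, pow_mul, hωN, one_pow, one_pow]
        simp
      have hsum0 : (∑ j : Fin N, (ζ β i) ^ (j : ℕ)) = 0 := by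
        rw [Fin.sum_univ_eq_sum_range]
        rw [geom_sum_eq hζne, hζN]
        simp
      rw [Finset.prod_eq_zero (Finset.mem_univ i) (by rw [hsum0, mul_zero]), mul_zero]
    · intro h
      exact absurd hαsupp h
  -- now the averaging inequality
  have habs : ‖S‖ ≤ ∑ k : Fin n → Fin N, ‖MvPolynomial.eval (z k) p‖ := by
    rw [hS]
    refine le_trans (norm_sum_le _ _) (Finset.sum_le_sum fun k _ => ?_)
    rw [norm_mul]
    have : ‖∏ i, ((ω ^ (α i))⁻¹) ^ (k i : ℕ)‖ = 1 := by
      rw [norm_prod]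
      refine Finset.prod_eq_one fun i _ => ?_
      rw [norm_pow, norm_inv, norm_pow, hωabs]
      simp
    rw [this, mul_one]
  have hSabs : ‖S‖ = r ^ (∑ i, α i) * (N : ℝ) ^ n := by
    rw [key, norm_mul, norm_pow, norm_pow]
    simp [Complex.norm_of_nonneg hr.le, Complex.norm_natCast, abs_of_pos hr]
  have hcard : (Fintype.card (Fin n → Fin N) : ℝ) = (N : ℝ) ^ n := by
    simp [Fintype.card_fun]
  have hsum_ge : ∑ k : Fin n → Fin N, (r ^ (∑ i, α i)) ≤
      ∑ k : Fin n → Fin N, ‖MvPolynomial.eval (z k) p‖ := by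
    rw [Finset.sum_const, nsmul_eq_mul]
    calc ((Finset.univ : Finset (Fin n → Fin N)).card : ℝ) * r ^ (∑ i, α i)
        = r ^ (∑ i, α i) * (N : ℝ) ^ n := by
          rw [Finset.card_univ, hcard]; ring
      _ = ‖S‖ := hSabs.symm
      _ ≤ _ := habs
  have hne : (Finset.univ : Finset (Fin n → Fin N)).Nonempty := Finset.univ_nonempty
  obtain ⟨k, _, hk⟩ := Finset.exists_le_of_sum_le hne hsum_ge
  refine ⟨z k, fun i => ?_, hk⟩
  rw [hz]
  simp only [norm_mul, norm_pow, hωabs, one_pow, mul_one]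
  rw [Complex.norm_of_nonneg hr.le]
end
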